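/- arXiv:1509.02485 — 7 statements merged into one kernel-verified Lean document; each statement's English description precedes it below -/
import Mathlib

section
/- Let G = (V,E) be a finite simple graph, V' ⊆ V, ρ : V' → ℕ a precoloring, and ≺ a linear order on V consistent with ρ. For v ∈ V' let rep(v) be the ≺-least element of ρ_{ρ(v)}. Let PREEXT≺(G,ρ) be the convex hull of the representative vectors of proper colorings of G whose representative vector x satisfies x_{(rep(v),v)} = 1 for every v ∈ V' with rep(v) ≠ v, and let Q = {x ∈ ℝ^A : x_{(rep(v),v)} = 1 for all v ∈ V' with rep(v) ≠ v}. Then PREEXT≺(G,ρ) = COL≺(G) ∩ Q. -/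
open scoped Classical

/-- `(u, v)` is an arc of `G` w.r.t. the order `lt`: `u ≺ v` and `uv ∉ E`. -/
abbrev IsArcPair {V : Type*} (G : SimpleGraph V) (lt : V → V → Prop) (p : V × V) : Prop :=
  lt p.1 p.2 ∧ ¬ G.Adj p.1 p.2

/-- The set of arcs of `G` (ordered non-edges), as a type. -/
abbrev Arc {V : Type*} (G : SimpleGraph V) (lt : V → V → Prop) : Type _ :=
  {p : V × V // IsArcPair G lt p}

/-- A proper coloring of a graph, as a color function. -/
def ProperColoring {W : Type*} (H : SimpleGraph W) (c : W → ℕ) : Prop :=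
  ∀ u v, H.Adj u v → c u ≠ c v

/-- `u` is the `lt`-least element of its color class under `c`. -/
def IsClassRep {V : Type*} (lt : V → V → Prop) (c : V → ℕ) (u : V) : Prop :=
  ∀ w, c w = c u → u = w ∨ lt u w

/-- The representative vector of a coloring `c`: `x (u,v) = 1` iff `u` and `v` have the
same color and `u` is the `lt`-least element of that color class. -/
noncomputable def repVec {V : Type*} (G : SimpleGraph V) (lt : V → V → Prop) (c : V → ℕ) :
    Arc G lt → ℝ := fun a =>
  if c a.1.1 = c a.1.2 ∧ IsClassRep lt c a.1.1 then 1 else 0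

/-- The coloring polytope: convex hull of representative vectors of proper colorings. -/
noncomputable def COL {V : Type*} (G : SimpleGraph V) (lt : V → V → Prop) :
    Set (Arc G lt → ℝ) :=
  convexHull ℝ {x | ∃ c : V → ℕ, ProperColoring G c ∧ x = repVec G lt c}

/-- A stable (independent) set of a graph. -/
def IsStableSet {W : Type*} (H : SimpleGraph W) (s : Set W) : Prop :=
  ∀ a ∈ s, ∀ b ∈ s, ¬ H.Adj a b

/-- The stable set polytope of a graph. -/
noncomputable def STAB {W : Type*} (H : SimpleGraph W) : Set (W → ℝ) :=
  convexHull ℝ {x | ∃ s : Set W, IsStableSet H s ∧ x = s.indicator 1}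

/-- The Cornaz–Jost graph `R≺(G)`: vertices are the arcs of `G`; two distinct arcs
`(a,b)` and `(c,d)` are adjacent iff they share an endpoint and it is not the case that
`a = c` and `bd ∉ E`. -/
def RGraph {V : Type*} (G : SimpleGraph V) (lt : V → V → Prop) : SimpleGraph (Arc G lt) where
  Adj p q := p ≠ q ∧
    (p.1.1 = q.1.1 ∨ p.1.1 = q.1.2 ∨ p.1.2 = q.1.1 ∨ p.1.2 = q.1.2) ∧
    ¬ (p.1.1 = q.1.1 ∧ ¬ G.Adj p.1.2 q.1.2)
  symm := by
    constructor
    rintro p q ⟨h1, h2, h3⟩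
    refine ⟨h1.symm, ?_, fun hc => h3 ⟨hc.1.symm, fun h => hc.2 (G.adj_symm h)⟩⟩
    rcases h2 with h | h | h | h
    · exact Or.inl h.symm
    · exact Or.inr (Or.inr (Or.inl h.symm))
    · exact Or.inr (Or.inl h.symm)
    · exact Or.inr (Or.inr (Or.inr h.symm))
  loopless := ⟨fun p h => h.1 rfl⟩

/-- The line graph of the complement of `G`, with the edges of the complement
identified with the arcs of `G`: two distinct arcs are adjacent iff they share an endpoint. -/
def lineGraphArc {V : Type*} (G : SimpleGraph V) (lt : V → V → Prop) :
    SimpleGraph (Arc G lt) where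
  Adj p q := p ≠ q ∧
    (p.1.1 = q.1.1 ∨ p.1.1 = q.1.2 ∨ p.1.2 = q.1.1 ∨ p.1.2 = q.1.2)
  symm := by
    constructor
    rintro p q ⟨h1, h2⟩
    refine ⟨h1.symm, ?_⟩
    rcases h2 with h | h | h | h
    · exact Or.inl h.symm
    · exact Or.inr (Or.inr (Or.inl h.symm))
    · exact Or.inr (Or.inl h.symm)
    · exact Or.inr (Or.inr (Or.inr h.symm))
  loopless := ⟨fun p h => h.1 rfl⟩

/-- The independence number of `H` is at most 2. -/
def AlphaLeTwo {W : Type*} (H : SimpleGraph W) : Prop :=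
  ∀ s : Set W, IsStableSet H s → s.ncard ≤ 2

/-- The chromatic number of a graph, as a natural number. -/
noncomputable def chromNum {W : Type*} (H : SimpleGraph W) : ℕ :=
  sInf {n : ℕ | ∃ c : W → ℕ, ProperColoring H c ∧ ∀ v, c v < n}

/-- `H` contains a copy of `F` as a (not necessarily induced) subgraph. -/
def ContainsCopy {α β : Type*} (F : SimpleGraph α) (H : SimpleGraph β) : Prop :=
  ∃ f : α → β, Function.Injective f ∧ ∀ a b, F.Adj a b → H.Adj (f a) (f b)

/-- `H` contains an induced copy of `F`. -/
def ContainsInducedCopy {α β : Type*} (F : SimpleGraph α) (H : SimpleGraph β) : Prop :=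
  ∃ f : α → β, Function.Injective f ∧ ∀ a b, H.Adj (f a) (f b) ↔ F.Adj a b

/-- The paw: a triangle `{0,1,2}` plus the vertex `3` adjacent only to `2`. -/
def pawGraph : SimpleGraph (Fin 4) :=
  SimpleGraph.fromEdgeSet {s(0, 1), s(0, 2), s(1, 2), s(2, 3)}

/-- The kite: the paw plus the vertex `4` adjacent only to `3` (the paw's degree-1 vertex). -/
def kiteGraph : SimpleGraph (Fin 5) :=
  SimpleGraph.fromEdgeSet {s(0, 1), s(0, 2), s(1, 2), s(2, 3), s(3, 4)}

/-- The claw `K_{1,3}`: vertex `0` adjacent to `1`, `2`, `3`. -/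
def clawGraph : SimpleGraph (Fin 4) :=
  SimpleGraph.fromEdgeSet {s(0, 1), s(0, 2), s(0, 3)}

/-- A graph is claw-free if it has no induced copy of `K_{1,3}`. -/
def ClawFree {W : Type*} (H : SimpleGraph W) : Prop :=
  ¬ ContainsInducedCopy clawGraph H

/-- A graph is quasi-line if the neighborhood of every vertex can be partitioned
into two cliques. -/
def QuasiLine {W : Type*} (H : SimpleGraph W) : Prop :=
  ∀ v : W, ∃ K₁ K₂ : Set W, Disjoint K₁ K₂ ∧ K₁ ∪ K₂ = {w | H.Adj v w} ∧
    H.IsClique K₁ ∧ H.IsClique K₂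

/-- A graph is hypomatchable if deleting any vertex leaves a graph with a perfect matching. -/
def Hypomatchable {W : Type*} (H : SimpleGraph W) : Prop :=
  ∀ u : W, ∃ M : (H.induce {v | v ≠ u}).Subgraph, M.IsPerfectMatching

/-- A graph is 2-connected: connected, at least 3 vertices, and deleting any vertex
leaves it connected. -/
def TwoConnected {W : Type*} [Fintype W] (H : SimpleGraph W) : Prop :=
  H.Connected ∧ 3 ≤ Fintype.card W ∧ ∀ u : W, (H.induce {v | v ≠ u}).Connected

/-- A set of arcs is a matching of the complement of `G`: no two distinct arcs share
an endpoint. -/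
def IsMatchingArcSet {V : Type*} (G : SimpleGraph V) (lt : V → V → Prop)
    (m : Set (Arc G lt)) : Prop :=
  ∀ p ∈ m, ∀ q ∈ m, p ≠ q →
    ¬ (p.1.1 = q.1.1 ∨ p.1.1 = q.1.2 ∨ p.1.2 = q.1.1 ∨ p.1.2 = q.1.2)

/-- The matching polytope of the complement of `G`, viewed in `ℝ^A` via the
identification of edges of the complement with arcs. -/
noncomputable def MATCHarcs {V : Type*} (G : SimpleGraph V) (lt : V → V → Prop) :
    Set (Arc G lt → ℝ) :=
  convexHull ℝ {x | ∃ m : Set (Arc G lt), IsMatchingArcSet G lt m ∧ x = m.indicator 1}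

/-- Restriction of a vector indexed by arcs of `G` to the arcs of an induced subgraph. -/
def restrictVec {V : Type*} (G : SimpleGraph V) (lt : V → V → Prop) (W : Set V)
    (x : Arc G lt → ℝ) : Arc (G.induce W) (fun a b => lt ↑a ↑b) → ℝ :=
  fun a => x ⟨(↑a.1.1, ↑a.1.2), a.2.1, a.2.2⟩

/-- `PREEXT≺(G,ρ) = COL≺(G) ∩ Q`. -/
theorem statement2 {V : Type*} [Fintype V] [DecidableEq V]
    (G : SimpleGraph V) [DecidableRel G.Adj]
    (lt : V → V → Prop) [DecidableRel lt] (hlt : IsStrictTotalOrder V lt)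
    (V' : Set V) (ρ : V → ℕ)
    -- `lt` is consistent with the precoloring `ρ` on `V'`:
    (hcons : ∀ w ∉ V', ∀ c : ℕ, (∃ v ∈ V', ρ v = c) → ∃ v ∈ V', ρ v = c ∧ lt v w)
    -- `rep v` is the `lt`-least element of the color class `ρ_{ρ(v)}`, for `v ∈ V'`:
    (rep : V → V)
    (hrep : ∀ v ∈ V', rep v ∈ V' ∧ ρ (rep v) = ρ v ∧
      ∀ u ∈ V', ρ u = ρ v → rep v = u ∨ lt (rep v) u) :
    convexHull ℝ {x : Arc G lt → ℝ | ∃ c : V → ℕ, ProperColoring G c ∧ x = repVec G lt c ∧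
        ∀ v ∈ V', rep v ≠ v →
          ∃ h : IsArcPair G lt (rep v, v), x ⟨(rep v, v), h⟩ = 1} =
      COL G lt ∩ {x : Arc G lt → ℝ | ∀ v ∈ V', rep v ≠ v →
          ∃ h : IsArcPair G lt (rep v, v), x ⟨(rep v, v), h⟩ = 1} := by
  apply Set.Subset.antisymm
  · apply convexHull_min
    · rintro x ⟨c, hc, hx, hcond⟩
      exact ⟨subset_convexHull ℝ _ ⟨c, hc, hx⟩, hcond⟩
    · refine (convex_convexHull ℝ _).inter ?_
      intro x hx y hy a b ha hb hab v hv hne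
      obtain ⟨h, hx1⟩ := hx v hv hne
      obtain ⟨h', hy1⟩ := hy v hv hne
      refine ⟨h, ?_⟩
      have hy1' : y ⟨(rep v, v), h⟩ = 1 := hy1
      simp only [Pi.add_apply, Pi.smul_apply, hx1, hy1', smul_eq_mul, mul_one]
      linarith
  · rintro x ⟨hCOL, hQ⟩
    rw [COL, convexHull_eq] at hCOL
    obtain ⟨ι, t, w, z, hw0, hw1, hz, hx⟩ := hCOL
    -- each coordinate of each generator is 0 or 1
    have hz01 : ∀ j ∈ t, ∀ a : Arc G lt, z j a = 0 ∨ z j a = 1 := by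
      intro j hj a
      obtain ⟨c, _, hzj⟩ := hz j hj
      rw [hzj, repVec]
      split <;> simp
    -- key: for any arc a with x a = 1, every generator with nonzero weight has z j a = 1
    have key : ∀ a : Arc G lt, x a = 1 → ∀ j ∈ t, w j ≠ 0 → z j a = 1 := by
      intro a hxa j hj hwj
      have hxa' : ∑ i ∈ t, w i * z i a = 1 := by
        have := congrFun hx a
        rw [Finset.centerMass, hw1, inv_one, one_smul] at this
        rw [← hxa, ← this]
        simp [Finset.sum_apply]
      have hsum0 : ∑ i ∈ t, w i * (1 - z i a) = 0 := by
        have : ∑ i ∈ t, w i * (1 - z i a) = (∑ i ∈ t, w i) - ∑ i ∈ t, w i * z i a := by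
          rw [← Finset.sum_sub_distrib]
          congr 1; ext i; ring
        rw [this, hw1, hxa', sub_self]
      have hnn : ∀ i ∈ t, 0 ≤ w i * (1 - z i a) := by
        intro i hi
        rcases hz01 i hi a with h0 | h1
        · rw [h0]; simpa using hw0 i hi
        · rw [h1]; simp
      have := (Finset.sum_eq_zero_iff_of_nonneg hnn).mp hsum0 j hj
      rcases mul_eq_zero.mp this with h | h
      · exact absurd h hwj
      · linarith
    rw [← hx, ← Finset.centerMass_filter_ne_zero]
    apply Finset.centerMass_mem_convexHull
    · intro i hi; exact hw0 i (Finset.mem_filter.mp hi).1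
    · rw [Finset.sum_filter_ne_zero, hw1]; norm_num
    · intro i hi
      obtain ⟨hit, hwi⟩ := Finset.mem_filter.mp hi
      obtain ⟨c, hc, hzi⟩ := hz i hit
      refine ⟨c, hc, hzi, ?_⟩
      intro v hv hne
      obtain ⟨h, hx1⟩ := hQ v hv hne
      exact ⟨h, hzi ▸ key ⟨(rep v, v), h⟩ hx1 i hit hwi⟩
end

section
/- Let G = (V,E) be a finite simple graph and ≺ a linear order on V. For every matching M of the complement of G, the corresponding set of arcs {(u,v) : u ≺ v, uv ∈ M} is an independent set of the Cornaz–Jost graph R≺(G); consequently, the matching polytope MATCH(comp G), viewed in ℝ^A via the identification of edges of the complement with arcs, is contained in COL≺(G). -/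
open scoped Classical

/-- For `v` a second endpoint of an arc of `m`, the corresponding first endpoint;
otherwise `v` itself. -/
noncomputable def arcRep {V : Type*} (G : SimpleGraph V) (lt : V → V → Prop)
    (m : Set (Arc G lt)) (v : V) : V :=
  if h : ∃ p : Arc G lt, p ∈ m ∧ p.1.2 = v then h.choose.1.1 else v

/-- The coloring associated to a matching of arcs. -/
noncomputable def arcCol {V : Type*} [Fintype V] (G : SimpleGraph V) (lt : V → V → Prop)
    (m : Set (Arc G lt)) (v : V) : ℕ := Fintype.equivFin V (arcRep G lt m v)

/-- every matching of the complement of `G` (as a set of arcs) is a stable set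
of `R≺(G)`; consequently `MATCH(comp G) ⊆ COL≺(G)`. -/
theorem statement4 {V : Type*} [Fintype V] [DecidableEq V]
    (G : SimpleGraph V) [DecidableRel G.Adj]
    (lt : V → V → Prop) [DecidableRel lt] (hlt : IsStrictTotalOrder V lt) :
    (∀ m : Set (Arc G lt), IsMatchingArcSet G lt m → IsStableSet (RGraph G lt) m) ∧
      MATCHarcs G lt ⊆ COL G lt := by
  haveI := hlt
  have hirr : ∀ x : V, ¬ lt x x := fun x => irrefl_of lt x
  have htr : ∀ {x y z : V}, lt x y → lt y z → lt x z := fun h1 h2 => trans_of lt h1 h2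
  constructor
  · intro m hm p hp q hq hadj
    exact hm p hp q hq hadj.1 hadj.2.1
  · unfold MATCHarcs COL
    apply convexHull_mono
    rintro x ⟨m, hm, rfl⟩
    set c := arcCol G lt m with hc
    -- basic facts about arcRep
    have hnm1 : ∀ p ∈ m, ¬ ∃ q : Arc G lt, q ∈ m ∧ q.1.2 = p.1.1 := by
      rintro p hp ⟨q, hq, hqe⟩
      by_cases hpq : q = p
      · subst hpq
        exact hirr q.1.1 (hqe ▸ q.2.1)
      · exact hm q hq p hp hpq (Or.inr (Or.inr (Or.inl hqe)))
    have hrep1 : ∀ p ∈ m, arcRep G lt m p.1.1 = p.1.1 := by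
      intro p hp
      exact dif_neg (hnm1 p hp)
    have hrep2 : ∀ p ∈ m, arcRep G lt m p.1.2 = p.1.1 := by
      intro p hp
      have h : ∃ q : Arc G lt, q ∈ m ∧ q.1.2 = p.1.2 := ⟨p, hp, rfl⟩
      rw [arcRep, dif_pos h]
      obtain ⟨hq, he⟩ := h.choose_spec
      by_cases hpq : h.choose = p
      · rw [hpq]
      · exact absurd (Or.inr (Or.inr (Or.inr he))) (hm h.choose hq p hp hpq)
    have hcinj : ∀ u v : V, c u = c v ↔ arcRep G lt m u = arcRep G lt m v := by
      intro u v
      constructor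
      · intro h
        exact (Fintype.equivFin V).injective (Fin.val_injective h)
      · intro h; simp [hc, arcCol, h]
    have hsame : ∀ u v : V, arcRep G lt m u = arcRep G lt m v →
        u = v ∨ ∃ p ∈ m, (p.1.1 = u ∧ p.1.2 = v) ∨ (p.1.1 = v ∧ p.1.2 = u) := by
      intro u v h
      by_cases hu : ∃ p : Arc G lt, p ∈ m ∧ p.1.2 = u
      · obtain ⟨p, hp, hpu⟩ := hu
        have hru : arcRep G lt m u = p.1.1 := by rw [← hpu]; exact hrep2 p hp
        by_cases hv : ∃ q : Arc G lt, q ∈ m ∧ q.1.2 = v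
        · obtain ⟨q, hq, hqv⟩ := hv
          have hrv : arcRep G lt m v = q.1.1 := by rw [← hqv]; exact hrep2 q hq
          have h11 : p.1.1 = q.1.1 := by rw [← hru, h, hrv]
          by_cases hpq : p = q
          · left; rw [← hpu, ← hqv, hpq]
          · exact absurd (Or.inl h11) (hm p hp q hq hpq)
        · have hrv : arcRep G lt m v = v := dif_neg hv
          right
          exact ⟨p, hp, Or.inr ⟨by rw [← hru, h, hrv], hpu⟩⟩
      · have hru : arcRep G lt m u = u := dif_neg hu
        by_cases hv : ∃ q : Arc G lt, q ∈ m ∧ q.1.2 = v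
        · obtain ⟨q, hq, hqv⟩ := hv
          have hrv : arcRep G lt m v = q.1.1 := by rw [← hqv]; exact hrep2 q hq
          right
          exact ⟨q, hq, Or.inl ⟨by rw [← hrv, ← h, hru], hqv⟩⟩
        · left
          rw [← hru, h]
          exact dif_neg hv
    refine ⟨c, ?_, ?_⟩
    · -- proper coloring
      intro u v hadj heq
      rcases hsame u v ((hcinj u v).mp heq) with h | ⟨p, hp, ⟨h1, h2⟩ | ⟨h1, h2⟩⟩
      · exact G.ne_of_adj hadj h
      · exact p.2.2 (h1 ▸ h2 ▸ hadj)
      · exact p.2.2 (h1 ▸ h2 ▸ hadj.symm)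
    · -- indicator = repVec
      funext a
      by_cases ha : a ∈ m
      · have h1 : c a.1.1 = c a.1.2 := by
          rw [hcinj, hrep1 a ha, hrep2 a ha]
        have h2 : IsClassRep lt c a.1.1 := by
          intro w hw
          have hrw : arcRep G lt m w = arcRep G lt m a.1.1 := (hcinj w a.1.1).mp hw
          rcases hsame w a.1.1 hrw with h | ⟨p, hp, ⟨hp1, hp2⟩ | ⟨hp1, hp2⟩⟩
          · exact Or.inl h.symm
          · exact absurd ⟨p, hp, hp2⟩ (hnm1 a ha)
          · by_cases hpa : p = a
            · subst hpa
              right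
              rw [← hp2]
              exact p.2.1
            · exact absurd (Or.inl hp1) (hm p hp a ha hpa)
        simp [Set.indicator, ha, repVec, h1, h2]
      · have h0 : ¬ (c a.1.1 = c a.1.2 ∧ IsClassRep lt c a.1.1) := by
          rintro ⟨heq, -⟩
          rcases hsame a.1.1 a.1.2 ((hcinj _ _).mp heq) with h | ⟨p, hp, ⟨hp1, hp2⟩ | ⟨hp1, hp2⟩⟩
          · exact hirr a.1.1 (h ▸ a.2.1)
          · have : p = a := Subtype.ext (Prod.ext hp1 hp2)
            exact ha (this ▸ hp)
          · exact hirr a.1.1 (htr a.2.1 (hp1 ▸ hp2 ▸ p.2.1))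
        simp [Set.indicator, ha, repVec, h0]
end

section
/- Let G = (V,E) be a finite simple graph. Then the independence number of G is at most 2 if and only if for every linear order ≺ on V, the matching polytope of the complement of G (viewed in ℝ^A via the identification of edges of the complement with arcs) equals COL≺(G). -/
open scoped Classical

section Aux6

variable {V : Type*} [Fintype V] [DecidableEq V] (G : SimpleGraph V) (lt : V → V → Prop)

lemma arc_unique6 {m : Set (Arc G lt)} (hm : IsMatchingArcSet G lt m)
    {a b : Arc G lt} (ha : a ∈ m) (hb : b ∈ m) {v : V}
    (hva : v = a.1.1 ∨ v = a.1.2) (hvb : v = b.1.1 ∨ v = b.1.2) : a = b := by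
  by_contra hne
  apply hm a ha b hb hne
  rcases hva with h | h <;> rcases hvb with h' | h' <;> rw [← h, ← h'] <;> tauto

noncomputable def repOf6 (m : Set (Arc G lt)) (v : V) : V :=
  if h : ∃ a ∈ m, v = a.1.1 ∨ v = a.1.2 then h.choose.1.1 else v

lemma repOf6_matched {m : Set (Arc G lt)} (hm : IsMatchingArcSet G lt m)
    {a : Arc G lt} (ha : a ∈ m) {v : V} (hv : v = a.1.1 ∨ v = a.1.2) :
    repOf6 G lt m v = a.1.1 := by
  have h : ∃ b ∈ m, v = b.1.1 ∨ v = b.1.2 := ⟨a, ha, hv⟩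
  rw [repOf6, dif_pos h,
    arc_unique6 G lt hm h.choose_spec.1 ha h.choose_spec.2 hv]

lemma repOf6_unmatched {m : Set (Arc G lt)} {v : V}
    (h : ¬ ∃ a ∈ m, v = a.1.1 ∨ v = a.1.2) : repOf6 G lt m v = v := dif_neg h

lemma matching_to_coloring6 (hlt : IsStrictTotalOrder V lt) {m : Set (Arc G lt)}
    (hm : IsMatchingArcSet G lt m) :
    ∃ c : V → ℕ, ProperColoring G c ∧ m.indicator 1 = repVec G lt c := by
  haveI := hlt
  set e : V → ℕ := fun v => ((Fintype.equivFin V) v).val with he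
  have einj : Function.Injective e := fun u v h =>
    (Fintype.equivFin V).injective (Fin.val_injective h)
  set c : V → ℕ := fun v => e (repOf6 G lt m v) with hc
  have key : ∀ u v, c u = c v → repOf6 G lt m u = repOf6 G lt m v :=
    fun u v h => einj h
  refine ⟨c, ?_, ?_⟩
  · intro u v huv hcc
    have hr := key u v hcc
    have hne : u ≠ v := G.ne_of_adj huv
    by_cases hu : ∃ a ∈ m, u = a.1.1 ∨ u = a.1.2 <;>
      by_cases hv : ∃ a ∈ m, v = a.1.1 ∨ v = a.1.2
    · obtain ⟨a, ha, hua⟩ := hu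
      obtain ⟨b, hb, hvb⟩ := hv
      rw [repOf6_matched G lt hm ha hua, repOf6_matched G lt hm hb hvb] at hr
      have hab : a = b := by
        by_contra hne'
        exact hm a ha b hb hne' (Or.inl hr)
      subst hab
      rcases hua with h1 | h1 <;> rcases hvb with h2 | h2
      · exact hne (h1.trans h2.symm)
      · exact a.2.2 (h1 ▸ h2 ▸ huv)
      · exact a.2.2 (h2 ▸ h1 ▸ huv.symm)
      · exact hne (h1.trans h2.symm)
    · obtain ⟨a, ha, hua⟩ := hu
      rw [repOf6_matched G lt hm ha hua, repOf6_unmatched G lt hv] at hr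
      exact hv ⟨a, ha, Or.inl hr.symm⟩
    · obtain ⟨b, hb, hvb⟩ := hv
      rw [repOf6_unmatched G lt hu, repOf6_matched G lt hm hb hvb] at hr
      exact hu ⟨b, hb, Or.inl hr⟩
    · rw [repOf6_unmatched G lt hu, repOf6_unmatched G lt hv] at hr
      exact hne hr
  · funext p
    have hiff : p ∈ m ↔ (c p.1.1 = c p.1.2 ∧ IsClassRep lt c p.1.1) := by
      constructor
      · intro hp
        have h1 : repOf6 G lt m p.1.1 = p.1.1 :=
          repOf6_matched G lt hm hp (Or.inl rfl)
        have h2 : repOf6 G lt m p.1.2 = p.1.1 :=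
          repOf6_matched G lt hm hp (Or.inr rfl)
        refine ⟨by simp only [hc, h1, h2], ?_⟩
        intro w hw
        have hrw : repOf6 G lt m w = p.1.1 := by
          have := key w p.1.1 hw
          rwa [h1] at this
        by_cases hwm : ∃ a ∈ m, w = a.1.1 ∨ w = a.1.2
        · obtain ⟨a, ha, hwa⟩ := hwm
          rw [repOf6_matched G lt hm ha hwa] at hrw
          have hap : a = p := by
            by_contra hne'
            exact hm a ha p hp hne' (Or.inl hrw)
          subst hap
          rcases hwa with h | h
          · exact Or.inl h.symm
          · exact Or.inr (h ▸ a.2.1)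
        · rw [repOf6_unmatched G lt hwm] at hrw
          exact Or.inl hrw.symm
      · rintro ⟨hcc, -⟩
        have hr := key _ _ hcc
        have hne : p.1.1 ≠ p.1.2 := fun h => irrefl_of lt p.1.1 (h ▸ p.2.1)
        by_cases hu : ∃ a ∈ m, p.1.1 = a.1.1 ∨ p.1.1 = a.1.2 <;>
          by_cases hv : ∃ a ∈ m, p.1.2 = a.1.1 ∨ p.1.2 = a.1.2
        · obtain ⟨a, ha, hua⟩ := hu
          obtain ⟨b, hb, hvb⟩ := hv
          rw [repOf6_matched G lt hm ha hua, repOf6_matched G lt hm hb hvb] at hr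
          have hab : a = b := by
            by_contra hne'
            exact hm a ha b hb hne' (Or.inl hr)
          subst hab
          rcases hua with h1 | h1 <;> rcases hvb with h2 | h2
          · exact absurd (h1.trans h2.symm) hne
          · have hpa : p = a := Subtype.ext (Prod.ext h1 h2)
            exact hpa ▸ ha
          · exact absurd (trans_of lt (h2 ▸ p.2.1 : lt p.1.1 a.1.1)
              (h1 ▸ a.2.1 : lt a.1.1 p.1.1)) (irrefl_of lt p.1.1)
          · exact absurd (h1.trans h2.symm) hne
        · obtain ⟨a, ha, hua⟩ := hu
          rw [repOf6_matched G lt hm ha hua, repOf6_unmatched G lt hv] at hr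
          exact absurd ⟨a, ha, Or.inl hr.symm⟩ hv
        · obtain ⟨b, hb, hvb⟩ := hv
          rw [repOf6_unmatched G lt hu, repOf6_matched G lt hm hb hvb] at hr
          exact absurd ⟨b, hb, Or.inl hr⟩ hu
        · rw [repOf6_unmatched G lt hu, repOf6_unmatched G lt hv] at hr
          exact absurd hr hne
    by_cases hp : p ∈ m
    · rw [Set.indicator_of_mem hp, repVec, if_pos (hiff.mp hp)]
      rfl
    · rw [Set.indicator_of_notMem hp, repVec,
        if_neg (fun hcond => hp (hiff.mpr hcond))]

lemma coloring_to_matching6 (hα : AlphaLeTwo G) (hlt : IsStrictTotalOrder V lt)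
    {c : V → ℕ} (hc : ProperColoring G c) :
    ∃ m : Set (Arc G lt), IsMatchingArcSet G lt m ∧
      repVec G lt c = m.indicator 1 := by
  haveI := hlt
  have hasym : ∀ {x y : V}, lt x y → lt y x → False := fun h1 h2 =>
    irrefl_of lt _ (trans_of lt h1 h2)
  have hstab : ∀ k : ℕ, IsStableSet G {v | c v = k} := by
    intro k u hu v hv hadj
    exact hc u v hadj (hu.trans hv.symm)
  have htriple : ∀ x y z : V, x ≠ y → x ≠ z → y ≠ z →
      c x = c y → c x = c z → False := by
    intro x y z hxy hxz hyz h1 h2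
    have hle := hα {v | c v = c x} (hstab (c x))
    have h3 : ({x, y, z} : Set V) ⊆ {v | c v = c x} := by
      intro w hw
      rcases hw with rfl | rfl | rfl
      · rfl
      · exact h1.symm
      · exact h2.symm
    have h4 : (3 : ℕ) ≤ ({v | c v = c x} : Set V).ncard := by
      have := Set.ncard_le_ncard h3 (Set.toFinite _)
      rwa [Set.ncard_eq_three.mpr ⟨x, y, z, hxy, hxz, hyz, rfl⟩] at this
    omega
  refine ⟨{a | c a.1.1 = c a.1.2 ∧ IsClassRep lt c a.1.1}, ?_, ?_⟩
  · rintro p ⟨hp1, hp2⟩ q ⟨hq1, hq2⟩ hne hshare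
    rcases hshare with h | h | h | h
    · have h12 : p.1.2 ≠ q.1.2 := fun hh => hne (Subtype.ext (Prod.ext h hh))
      have hne1 : p.1.1 ≠ p.1.2 := fun hh => irrefl_of lt p.1.1 (hh ▸ p.2.1)
      have hne2 : p.1.1 ≠ q.1.2 := fun hh =>
        irrefl_of lt q.1.1 ((h.symm.trans hh : q.1.1 = q.1.2) ▸ q.2.1)
      exact htriple p.1.1 p.1.2 q.1.2 hne1 hne2 h12 hp1 (h ▸ hq1)
    · -- p.1.1 = q.1.2
      have hcq : c q.1.1 = c p.1.1 := hq1.trans (h ▸ rfl)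
      rcases hp2 q.1.1 hcq with h1 | h1
      · exact irrefl_of lt q.1.1 ((h1 ▸ h : q.1.1 = q.1.2) ▸ q.2.1)
      · exact hasym h1 (h ▸ q.2.1)
    · -- p.1.2 = q.1.1
      have hcp : c p.1.1 = c q.1.1 := hp1.trans (congrArg c h)
      rcases hq2 p.1.1 hcp with h1 | h1
      · exact irrefl_of lt p.1.1 ((h1.symm.trans h.symm : p.1.1 = p.1.2) ▸ p.2.1)
      · exact hasym (h ▸ p.2.1) h1
    · -- p.1.2 = q.1.2
      have hcq : c q.1.1 = c p.1.1 := hq1.trans (h ▸ hp1).symm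
      rcases hp2 q.1.1 hcq with h1 | h1
      · exact hne (Subtype.ext (Prod.ext h1 h))
      · rcases hq2 p.1.1 hcq.symm with h2 | h2
        · exact hne (Subtype.ext (Prod.ext h2.symm h))
        · exact hasym h1 h2
  · funext a
    by_cases hcond : (c a.1.1 = c a.1.2 ∧ IsClassRep lt c a.1.1)
    · rw [repVec, if_pos hcond, Set.indicator_of_mem
        (show a ∈ {b : Arc G lt | c b.1.1 = c b.1.2 ∧ IsClassRep lt c b.1.1} from hcond)]
      rfl
    · rw [repVec, if_neg hcond, Set.indicator_of_notMem
        (show a ∉ {b : Arc G lt | c b.1.1 = c b.1.2 ∧ IsClassRep lt c b.1.1} from hcond)]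

end Aux6

/-- `α(G) ≤ 2` iff for every linear order `≺` on `V`, the matching polytope of
the complement of `G` equals `COL≺(G)`. -/
theorem statement6 {V : Type*} [Fintype V] [DecidableEq V]
    (G : SimpleGraph V) [DecidableRel G.Adj] :
    AlphaLeTwo G ↔
      ∀ lt : V → V → Prop, IsStrictTotalOrder V lt → MATCHarcs G lt = COL G lt := by
  classical
  constructor
  · intro hα lt hlt
    unfold MATCHarcs COL
    congr 1
    ext x
    constructor
    · rintro ⟨m, hm, rfl⟩
      obtain ⟨c, hc, heq⟩ := matching_to_coloring6 G lt hlt hm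
      exact ⟨c, hc, heq⟩
    · rintro ⟨c, hc, rfl⟩
      obtain ⟨m, hm, heq⟩ := coloring_to_matching6 G lt hα hlt hc
      exact ⟨m, hm, heq⟩
  · intro h
    by_contra hα
    unfold AlphaLeTwo at hα
    push_neg at hα
    obtain ⟨s, hs, hcard⟩ := hα
    obtain ⟨t, hts, htc⟩ := Set.exists_subset_card_eq (show 3 ≤ s.ncard from hcard)
    obtain ⟨a, b, d, hab, had, hbd, rfl⟩ := Set.ncard_eq_three.mp htc
    set e := Fintype.equivFin V with he
    set lt : V → V → Prop := fun u v => e u < e v with hltdef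
    haveI htrich : IsTrichotomous V lt := ⟨fun u v => by
      rcases lt_trichotomy (e u) (e v) with h' | h' | h'
      · exact fun h1 _ => absurd h' h1
      · exact fun _ _ => e.injective h'
      · exact fun _ h2 => absurd h' h2⟩
    haveI hirr : IsIrrefl V lt := ⟨fun u => lt_irrefl (e u)⟩
    haveI htr : IsTrans V lt := ⟨fun u v w h1 h2 => lt_trans h1 h2⟩
    haveI hso : IsStrictOrder V lt := { }
    have hlt : IsStrictTotalOrder V lt := { }
    have has : a ∈ s := hts (by simp)
    have hbs : b ∈ s := hts (by simp)
    have hds : d ∈ s := hts (by simp)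
    have tot : ∀ u v : V, u ≠ v → lt u v ∨ lt v u := fun u v huv => by
      rcases trichotomous_of lt u v with h' | h' | h'
      · exact Or.inl h'
      · exact absurd h' huv
      · exact Or.inr h'
    have hsort : ∃ x y z : V, lt x y ∧ lt y z ∧ x ∈ s ∧ y ∈ s ∧ z ∈ s := by
      rcases tot a b hab with h1 | h1 <;> rcases tot a d had with h2 | h2 <;>
        rcases tot b d hbd with h3 | h3
      · exact ⟨a, b, d, h1, h3, has, hbs, hds⟩
      · exact ⟨a, d, b, h2, h3, has, hds, hbs⟩
      · exact absurd (trans_of lt (trans_of lt h1 h3) h2) (irrefl_of lt a)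
      · exact ⟨d, a, b, h2, h1, hds, has, hbs⟩
      · exact ⟨b, a, d, h1, h2, hbs, has, hds⟩
      · exact absurd (trans_of lt (trans_of lt h2 h3) h1) (irrefl_of lt a)
      · exact ⟨b, d, a, h3, h2, hbs, hds, has⟩
      · exact ⟨d, b, a, h3, h1, hds, hbs, has⟩
    obtain ⟨x, y, z, hxy, hyz, hxs, hys, hzs⟩ := hsort
    have hxz : lt x z := trans_of lt hxy hyz
    let p : Arc G lt := ⟨(x, y), hxy, hs x hxs y hys⟩
    let q : Arc G lt := ⟨(x, z), hxz, hs x hxs z hzs⟩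
    set c0 : V → ℕ := fun v => if v = x ∨ v = y ∨ v = z then 0 else (e v).val + 1
      with hc0
    have hc0zero : ∀ w, c0 w = 0 → w = x ∨ w = y ∨ w = z := by
      intro w hw
      by_contra hww
      rw [hc0] at hw
      simp only [if_neg hww] at hw
      exact Nat.succ_ne_zero _ hw
    have hc0x : c0 x = 0 := by simp [hc0]
    have hc0y : c0 y = 0 := by simp [hc0]
    have hc0z : c0 z = 0 := by simp [hc0]
    have hc0proper : ProperColoring G c0 := by
      intro u v huv
      by_cases hu : u = x ∨ u = y ∨ u = z <;> by_cases hv : v = x ∨ v = y ∨ v = z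
      · exfalso
        have hus : u ∈ s := by rcases hu with rfl | rfl | rfl <;> assumption
        have hvs : v ∈ s := by rcases hv with rfl | rfl | rfl <;> assumption
        exact hs u hus v hvs huv
      · simp only [hc0, if_pos hu, if_neg hv]
        exact fun hh => Nat.succ_ne_zero _ hh.symm
      · simp only [hc0, if_neg hu, if_pos hv]
        exact fun hh => Nat.succ_ne_zero _ hh
      · simp only [hc0, if_neg hu, if_neg hv]
        intro hh
        exact G.ne_of_adj huv (e.injective (Fin.val_injective (Nat.succ_injective hh)))
    have hrep : IsClassRep lt c0 x := by
      intro w hw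
      rw [hc0x] at hw
      rcases hc0zero w hw with rfl | rfl | rfl
      · exact Or.inl rfl
      · exact Or.inr hxy
      · exact Or.inr hxz
    have hvp : repVec G lt c0 p = 1 := by
      rw [repVec]
      exact if_pos ⟨hc0x.trans hc0y.symm, hrep⟩
    have hvq : repVec G lt c0 q = 1 := by
      rw [repVec]
      exact if_pos ⟨hc0x.trans hc0z.symm, hrep⟩
    have hx0COL : repVec G lt c0 ∈ COL G lt :=
      subset_convexHull ℝ _ ⟨c0, hc0proper, rfl⟩
    rw [← h lt hlt] at hx0COL
    have hlin : IsLinearMap ℝ (fun yv : Arc G lt → ℝ => yv p + yv q) := by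
      constructor
      · intro u v
        simp only [Pi.add_apply]
        ring
      · intro r u
        simp only [Pi.smul_apply, smul_eq_mul]
        ring
    have hsub : MATCHarcs G lt ⊆ {yv : Arc G lt → ℝ | yv p + yv q ≤ 1} := by
      apply convexHull_min ?_ (convex_halfSpace_le hlin 1)
      rintro yv ⟨m, hm, rfl⟩
      simp only [Set.mem_setOf_eq]
      by_cases hpm : p ∈ m <;> by_cases hqm : q ∈ m
      · exfalso
        have hpq : p ≠ q := by
          intro hh
          have : y = z := congrArg (fun r => r.1.2) hh
          exact irrefl_of lt y (this ▸ hyz)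
        exact hm p hpm q hqm hpq (Or.inl rfl)
      · rw [Set.indicator_of_mem hpm, Set.indicator_of_notMem hqm]
        norm_num
      · rw [Set.indicator_of_notMem hpm, Set.indicator_of_mem hqm]
        norm_num
      · rw [Set.indicator_of_notMem hpm, Set.indicator_of_notMem hqm]
        norm_num
    have hfinal := hsub hx0COL
    rw [Set.mem_setOf_eq, hvp, hvq] at hfinal
    norm_num at hfinal
end

section
/- Let G = (V,E) be a finite simple graph, ≺ a linear order on V, and S ⊆ V a set of odd cardinality such that the independence number of G[S] is at most 2. Then every point x of COL≺(G) satisfies the odd-set inequality: the sum of x_a over all arcs a with both endpoints in S is at most (|S|−1)/2. -/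
open scoped Classical

lemma statement9_vertex {V : Type*} [Fintype V] [DecidableEq V]
    (G : SimpleGraph V) [DecidableRel G.Adj]
    (lt : V → V → Prop) [DecidableRel lt] (hlt : IsStrictTotalOrder V lt)
    (S : Finset V) (hodd : Odd S.card) (hα : AlphaLeTwo (G.induce (↑S : Set V)))
    (c : V → ℕ) (hc : ProperColoring G c) :
    (∑ a : Arc G lt, if a.1.1 ∈ S ∧ a.1.2 ∈ S then repVec G lt c a else 0) ≤
      ((S.card : ℝ) - 1) / 2 := by
  classical
  haveI := hlt
  have hirr : ∀ v : V, ¬ lt v v := fun v => irrefl_of lt v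
  have htr : ∀ {u v w : V}, lt u v → lt v w → lt u w := fun h1 h2 => trans_of lt h1 h2
  set P : Arc G lt → Prop := fun a =>
    a.1.1 ∈ S ∧ a.1.2 ∈ S ∧ c a.1.1 = c a.1.2 ∧ IsClassRep lt c a.1.1 with hP
  set T : Finset (Arc G lt) := Finset.univ.filter P with hT
  have hsum : (∑ a : Arc G lt, if a.1.1 ∈ S ∧ a.1.2 ∈ S then repVec G lt c a else 0)
      = (T.card : ℝ) := by
    rw [hT, ← Finset.sum_boole]
    refine Finset.sum_congr rfl fun a _ => ?_
    unfold repVec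
    by_cases h1 : a.1.1 ∈ S ∧ a.1.2 ∈ S
    · by_cases h2 : c a.1.1 = c a.1.2 ∧ IsClassRep lt c a.1.1
      · rw [if_pos h1, if_pos h2, if_pos (show P a from ⟨h1.1, h1.2, h2.1, h2.2⟩)]
      · rw [if_pos h1, if_neg h2, if_neg (show ¬ P a from fun hp => h2 ⟨hp.2.2.1, hp.2.2.2⟩)]
    · rw [if_neg h1, if_neg (show ¬ P a from fun hp => h1 ⟨hp.1, hp.2.1⟩)]
  rw [hsum]
  have hsame : ∀ u v, c u = c v → ¬ G.Adj u v := fun u v h hadj => hc u v hadj h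
  let f : Arc G lt × Bool → V := fun q => match q.2 with
    | true => q.1.1.1
    | false => q.1.1.2
  have hrepeq : ∀ a b : Arc G lt, P a → P b → c a.1.1 = c b.1.1 → a.1.1 = b.1.1 := by
    intro a b ha hb hcol
    rcases ha.2.2.2 b.1.1 hcol.symm with h | h
    · exact h
    rcases hb.2.2.2 a.1.1 hcol with h' | h'
    · exact h'.symm
    exact absurd (htr h h') (hirr _)
  have hstab : ∀ a b : Arc G lt, P a → P b → a.1.1 = b.1.1 → a.1.2 = b.1.2 := by
    intro a b ha hb h11
    by_contra hne
    set s : Set ((↑S : Set V)) := {w | c ↑w = c a.1.1} with hs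
    have hstable : IsStableSet (G.induce (↑S : Set V)) s := by
      intro u hu v hv hadj
      exact hsame ↑u ↑v (hu.trans hv.symm) hadj
    have hcard := hα s hstable
    have hx1 : (⟨a.1.1, ha.1⟩ : (↑S : Set V)) ∈ s := rfl
    have hx2 : (⟨a.1.2, ha.2.1⟩ : (↑S : Set V)) ∈ s := ha.2.2.1.symm
    have hx3 : (⟨b.1.2, hb.2.1⟩ : (↑S : Set V)) ∈ s := by
      show c b.1.2 = c a.1.1
      rw [← hb.2.2.1, ← h11]
    have hne12 : a.1.1 ≠ a.1.2 := fun h => hirr a.1.1 (h ▸ a.2.1)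
    have hne13 : a.1.1 ≠ b.1.2 := by
      intro h
      have hb2 := b.2.1
      rw [← h11, ← h] at hb2
      exact hirr _ hb2
    have hsub : ({⟨a.1.1, ha.1⟩, ⟨a.1.2, ha.2.1⟩, ⟨b.1.2, hb.2.1⟩} : Set ((↑S : Set V))) ⊆ s := by
      intro w hw
      rcases hw with h | h | h <;> subst h <;> assumption
    have h3 : ({⟨a.1.1, ha.1⟩, ⟨a.1.2, ha.2.1⟩, ⟨b.1.2, hb.2.1⟩} :
        Set ((↑S : Set V))).ncard = 3 := by
      rw [Set.ncard_insert_of_notMem (by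
            simp only [Set.mem_insert_iff, Set.mem_singleton_iff]
            push_neg
            exact ⟨fun h => hne12 (congrArg Subtype.val h),
              fun h => hne13 (congrArg Subtype.val h)⟩) (Set.toFinite _),
          Set.ncard_insert_of_notMem (by
            simp only [Set.mem_singleton_iff]
            intro h; exact hne (congrArg Subtype.val h)) (Set.toFinite _),
          Set.ncard_singleton]
    have := Set.ncard_le_ncard hsub (Set.toFinite s)
    omega
  have hinj : Set.InjOn f ↑(T ×ˢ (Finset.univ : Finset Bool)) := by
    rintro ⟨a, i⟩ hai ⟨b, j⟩ hbj hfeq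
    have ha : P a := (Finset.mem_filter.mp (Finset.mem_product.mp hai).1).2
    have hb : P b := (Finset.mem_filter.mp (Finset.mem_product.mp hbj).1).2
    cases i <;> cases j
    · -- false, false : a.1.2 = b.1.2
      have hfeq' : a.1.2 = b.1.2 := hfeq
      have hcol : c a.1.1 = c b.1.1 := by rw [ha.2.2.1, hb.2.2.1, hfeq']
      exact Prod.ext (Subtype.ext (Prod.ext (hrepeq a b ha hb hcol) hfeq')) rfl
    · -- false, true : a.1.2 = b.1.1
      exfalso
      have hfeq' : a.1.2 = b.1.1 := hfeq
      have hcol : c a.1.1 = c b.1.1 := by rw [ha.2.2.1, hfeq']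
      have h := hrepeq a b ha hb hcol
      have ha2 := a.2.1
      rw [hfeq', ← h] at ha2
      exact hirr _ ha2
    · -- true, false : a.1.1 = b.1.2
      exfalso
      have hfeq' : a.1.1 = b.1.2 := hfeq
      have hcol : c a.1.1 = c b.1.1 := by rw [hfeq', hb.2.2.1]
      have h := hrepeq a b ha hb hcol
      have hb2 := b.2.1
      rw [← h, ← hfeq'] at hb2
      exact hirr _ hb2
    · -- true, true : a.1.1 = b.1.1
      have hfeq' : a.1.1 = b.1.1 := hfeq
      exact Prod.ext (Subtype.ext (Prod.ext hfeq' (hstab a b ha hb hfeq'))) rfl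
  have hmaps : ∀ q ∈ T ×ˢ (Finset.univ : Finset Bool), f q ∈ S := by
    rintro ⟨a, i⟩ hq
    have ha : P a := (Finset.mem_filter.mp (Finset.mem_product.mp hq).1).2
    cases i
    · exact ha.2.1
    · exact ha.1
  have hle : (T ×ˢ (Finset.univ : Finset Bool)).card ≤ S.card :=
    Finset.card_le_card_of_injOn f hmaps hinj
  rw [Finset.card_product] at hle
  simp only [Finset.card_univ, Fintype.card_bool] at hle
  obtain ⟨k, hk⟩ := hodd
  have hkle : T.card ≤ k := by omega
  rw [hk]
  push_cast
  rw [show ((2:ℝ) * k + 1 - 1) / 2 = (k : ℝ) by ring]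
  exact_mod_cast hkle

/-- if `|S|` is odd and `α(G[S]) ≤ 2`, then every point of `COL≺(G)` satisfies
the odd-set inequality over `S`. -/
theorem statement9 {V : Type*} [Fintype V] [DecidableEq V]
    (G : SimpleGraph V) [DecidableRel G.Adj]
    (lt : V → V → Prop) [DecidableRel lt] (hlt : IsStrictTotalOrder V lt)
    (S : Finset V) (hodd : Odd S.card) (hα : AlphaLeTwo (G.induce (↑S : Set V)))
    (x : Arc G lt → ℝ) (hx : x ∈ COL G lt) :
    (∑ a : Arc G lt, if a.1.1 ∈ S ∧ a.1.2 ∈ S then x a else 0) ≤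
      ((S.card : ℝ) - 1) / 2 := by
  have hlin : IsLinearMap ℝ (fun y : Arc G lt → ℝ =>
      ∑ a : Arc G lt, if a.1.1 ∈ S ∧ a.1.2 ∈ S then y a else 0) := by
    constructor
    · intro y z
      rw [← Finset.sum_add_distrib]
      refine Finset.sum_congr rfl fun a _ => ?_
      by_cases h : a.1.1 ∈ S ∧ a.1.2 ∈ S <;> simp [h]
    · intro r y
      rw [smul_eq_mul, Finset.mul_sum]
      refine Finset.sum_congr rfl fun a _ => ?_
      by_cases h : a.1.1 ∈ S ∧ a.1.2 ∈ S <;> simp [h]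
  have hconv : Convex ℝ {y : Arc G lt → ℝ |
      (∑ a : Arc G lt, if a.1.1 ∈ S ∧ a.1.2 ∈ S then y a else 0) ≤ ((S.card : ℝ) - 1) / 2} :=
    convex_halfSpace_le hlin _
  refine convexHull_min ?_ hconv hx
  rintro y ⟨c, hc, rfl⟩
  exact statement9_vertex G lt hlt S hodd hα c hc
end

section
/- Let H be a finite simple graph on a vertex set S that is 2-connected and hypomatchable, and suppose the independence number of the complement of H is at most 2. Then |S| is odd and the chromatic number of the complement of H equals (|S|+1)/2. -/
open scoped Classical

lemma exists_invol {W : Type*} (H : SimpleGraph W) (hhm : Hypomatchable H) (u : W) :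
    ∃ f : W → W, f u = u ∧ (∀ v, f (f v) = v) ∧ ∀ v, v ≠ u → H.Adj v (f v) := by
  obtain ⟨M, hM⟩ := hhm u
  set g : {v : W // v ≠ u} → {v : W // v ≠ u} := fun v => (hM.1 (hM.2 v)).choose with hgdef
  have hg : ∀ v, M.Adj v (g v) := fun v => (hM.1 (hM.2 v)).choose_spec.1
  have huniq : ∀ v w, M.Adj v w → w = g v := fun v w h => (hM.1 (hM.2 v)).choose_spec.2 w h
  have hgg : ∀ v, g (g v) = v := fun v => (huniq (g v) v ((hg v).symm)).symm
  refine ⟨fun v => if h : v = u then u else ↑(g ⟨v, h⟩), dif_pos rfl, ?_, ?_⟩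
  · intro v
    by_cases h : v = u
    · simp [h]
    · show (if h2 : (if h : v = u then u else (g ⟨v, h⟩ : W)) = u then u
        else (g ⟨_, h2⟩ : W)) = v
      rw [dif_neg h, dif_neg (g ⟨v, h⟩).2]
      exact congrArg Subtype.val (hgg ⟨v, h⟩)
  · intro v h
    show H.Adj v (if h : v = u then u else (g ⟨v, h⟩ : W))
    rw [dif_neg h]
    exact M.adj_sub (hg ⟨v, h⟩)


/-- if `H` is 2-connected and hypomatchable and `α(Hᶜ) ≤ 2`, then the number
of vertices is odd and `χ(Hᶜ) = (|S|+1)/2`. -/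
theorem statement11 {W : Type*} [Fintype W] [DecidableEq W] (H : SimpleGraph W)
    (h2c : TwoConnected H) (hhm : Hypomatchable H) (hα : AlphaLeTwo Hᶜ) :
    Odd (Fintype.card W) ∧ chromNum Hᶜ = (Fintype.card W + 1) / 2 := by
  have hne : Nonempty W := by
    have := h2c.2.1
    exact Fintype.card_pos_iff.mp (by omega)
  set n := Fintype.card W with hn
  obtain ⟨u⟩ := hne
  obtain ⟨f, hfu, hff, hfadj⟩ := exists_invol H hhm u
  have hfinj : Function.Injective f := Function.LeftInverse.injective hff
  set e : W → ℕ := fun v => (Fintype.equivFin W v : ℕ) with he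
  have heinj : Function.Injective e :=
    fun a b h => (Fintype.equivFin W).injective (Fin.val_injective h)
  set c : W → ℕ := fun v => min (e v) (e (f v)) with hc
  have hcf : ∀ v, c (f v) = c v := by
    intro v; simp only [hc, hff v, min_comm]
  have hkey : ∀ v w, c v = c w → w = v ∨ w = f v := by
    intro v w h
    have h1 : c v = e v ∨ c v = e (f v) := min_choice _ _
    have h2 : c w = e w ∨ c w = e (f w) := min_choice _ _
    rcases h1 with h1 | h1 <;> rcases h2 with h2 | h2 <;>
      rw [h, h2] at h1
    · exact Or.inl (heinj h1)
    · refine Or.inr ?_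
      have h3 := heinj h1
      rw [← h3, hff]
    · exact Or.inr (heinj h1)
    · exact Or.inl (hfinj (heinj h1))
  have hfne : ∀ v, v ≠ u → f v ≠ v := fun v hv => fun h =>
    (H.loopless.irrefl v) (by have := hfadj v hv; rwa [h] at this)
  have hfiber : ∀ v : W, Finset.univ.filter (fun w => c w = c v) = {v, f v} := by
    intro v
    ext w
    simp only [Finset.mem_filter, Finset.mem_univ, true_and, Finset.mem_insert,
      Finset.mem_singleton]
    constructor
    · intro h; exact hkey v w h.symm
    · rintro (rfl | rfl)
      · rfl
      · exact hcf v
  set T : Finset ℕ := Finset.image c Finset.univ with hT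
  have hmemT : ∀ v, c v ∈ T := fun v => Finset.mem_image_of_mem c (Finset.mem_univ v)
  have hsum : n = ∑ t ∈ T, (Finset.univ.filter (fun w => c w = t)).card :=
    Finset.card_eq_sum_card_fiberwise (fun x _ => hmemT x)
  have hcuT : c u ∈ T := hmemT u
  have hsum2 : ∑ t ∈ T, (Finset.univ.filter (fun w => c w = t)).card
      = (Finset.univ.filter (fun w => c w = c u)).card
        + ∑ t ∈ T.erase (c u), (Finset.univ.filter (fun w => c w = t)).card :=
    (Finset.add_sum_erase T _ hcuT).symm
  have hfib_u : (Finset.univ.filter (fun w => c w = c u)).card = 1 := by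
    rw [hfiber u, hfu]
    simp
  have hfib2 : ∀ t ∈ T.erase (c u), (Finset.univ.filter (fun w => c w = t)).card = 2 := by
    intro t ht
    obtain ⟨v, _, rfl⟩ := Finset.mem_image.mp (Finset.mem_of_mem_erase ht)
    have hvu : v ≠ u := by
      rintro rfl
      exact (Finset.ne_of_mem_erase ht) rfl
    rw [hfiber v]
    rw [Finset.card_insert_of_notMem (by simp only [Finset.mem_singleton]; exact (hfne v hvu).symm),
      Finset.card_singleton]
  have hsum3 : ∑ t ∈ T.erase (c u), (Finset.univ.filter (fun w => c w = t)).card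
      = 2 * (T.erase (c u)).card := by
    rw [Finset.sum_congr rfl hfib2]
    simp [mul_comm]
  have hTpos : 1 ≤ T.card := Finset.card_pos.mpr ⟨c u, hcuT⟩
  have herase : (T.erase (c u)).card = T.card - 1 := Finset.card_erase_of_mem hcuT
  have hmain : n + 1 = 2 * T.card := by
    rw [hsum, hsum2, hfib_u, hsum3, herase]; omega
  constructor
  · exact ⟨T.card - 1, by omega⟩
  · -- chromatic number
    have hhalf : (n + 1) / 2 = T.card := by omega
    rw [hhalf]
    -- the compressed coloring
    set iso := T.orderIsoOfFin rfl with hiso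
    set c' : W → ℕ := fun v => (iso.symm ⟨c v, hmemT v⟩ : Fin T.card) with hc'
    have hc'lt : ∀ v, c' v < T.card := fun v => (iso.symm ⟨c v, hmemT v⟩).isLt
    have hc'inj : ∀ v w, c' v = c' w → c v = c w := by
      intro v w h
      have : iso.symm ⟨c v, hmemT v⟩ = iso.symm ⟨c w, hmemT w⟩ := Fin.val_injective h
      have := iso.symm.injective this
      exact congrArg Subtype.val this
    have hproper : ProperColoring Hᶜ c' := by
      intro v w hvw hcc
      rw [SimpleGraph.compl_adj] at hvw
      rcases hkey v w (hc'inj v w hcc) with rfl | rfl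
      · exact hvw.1 rfl
      · by_cases hvu : v = u
        · subst hvu; rw [hfu] at hvw; exact hvw.1 rfl
        · exact hvw.2 (hfadj v hvu)
    have hmem : T.card ∈ {k : ℕ | ∃ d : W → ℕ, ProperColoring Hᶜ d ∧ ∀ v, d v < k} :=
      ⟨c', hproper, hc'lt⟩
    refine le_antisymm (Nat.sInf_le hmem) (le_csInf ⟨_, hmem⟩ ?_)
    rintro k ⟨d, hd, hdk⟩
    have hsumd : n = ∑ i ∈ Finset.range k, (Finset.univ.filter (fun w => d w = i)).card :=
      Finset.card_eq_sum_card_fiberwise (fun x _ => Finset.mem_range.mpr (hdk x))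
    have hfibd : ∀ i ∈ Finset.range k, (Finset.univ.filter (fun w => d w = i)).card ≤ 2 := by
      intro i _
      have hst : IsStableSet Hᶜ (↑(Finset.univ.filter (fun w => d w = i)) : Set W) := by
        intro a ha b hb hab
        simp only [Finset.coe_filter, Set.mem_setOf_eq] at ha hb
        exact hd a b hab (ha.2.trans hb.2.symm)
      have := hα _ hst
      rwa [Set.ncard_coe_finset] at this
    have : n ≤ 2 * k := by
      calc n = _ := hsumd
        _ ≤ ∑ _i ∈ Finset.range k, 2 := Finset.sum_le_sum hfibd
        _ = 2 * k := by simp [mul_comm]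
    omega
end

section
/- Let G = (V,E) be a finite simple graph whose complement contains no paw as a subgraph, and let ≺ be any linear order on V. Then the Cornaz–Jost graph R≺(G) is a line graph, i.e., there exists a finite simple graph H such that R≺(G) is isomorphic to the line graph L(H). -/
open scoped Classical

section CJAux
open SimpleGraph

noncomputable def lineGraphIso {A B : Type*} {G₁ : SimpleGraph A} {G₂ : SimpleGraph B}
    (φ : G₁ ≃g G₂) : G₁.lineGraph ≃g G₂.lineGraph where
  toEquiv := φ.mapEdgeSet
  map_rel_iff' := by
    rintro ⟨e, he⟩ ⟨f, hf⟩
    have key : ∀ e f : Sym2 A,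
        ((Sym2.map φ e : Sym2 B) ∩ (Sym2.map φ f : Sym2 B) : Set B).Nonempty ↔
        ((e : Set A) ∩ (f : Set A)).Nonempty := by
      intro e f
      rw [Set.inter_nonempty, Set.inter_nonempty]
      constructor
      · rintro ⟨v, hv1, hv2⟩
        rw [SetLike.mem_coe, Sym2.mem_map] at hv1 hv2
        obtain ⟨a, ha, rfl⟩ := hv1
        obtain ⟨b, hb, hab⟩ := hv2
        exact ⟨a, SetLike.mem_coe.2 ha, SetLike.mem_coe.2 (φ.injective hab ▸ hb)⟩
      · rintro ⟨v, hv1, hv2⟩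
        exact ⟨φ v, SetLike.mem_coe.2 (Sym2.mem_map.2 ⟨v, SetLike.mem_coe.1 hv1, rfl⟩),
          SetLike.mem_coe.2 (Sym2.mem_map.2 ⟨v, SetLike.mem_coe.1 hv2, rfl⟩)⟩
    constructor
    · rintro ⟨hne, hint⟩
      refine ⟨fun h => hne (by simp [h]), ?_⟩
      simpa using (key e f).1
        (by simpa [SimpleGraph.Iso.mapEdgeSet, SimpleGraph.Hom.mapEdgeSet] using hint)
    · rintro ⟨hne, hint⟩
      refine ⟨?_, ?_⟩
      · intro h
        apply hne
        have := (φ.mapEdgeSet.injective (a₁ := ⟨e, he⟩) (a₂ := ⟨f, hf⟩))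
        exact this (Subtype.ext
          (by simpa [SimpleGraph.Iso.mapEdgeSet, SimpleGraph.Hom.mapEdgeSet]
            using congrArg (Subtype.val) h))
      · simpa [SimpleGraph.Iso.mapEdgeSet, SimpleGraph.Hom.mapEdgeSet]
          using (key e f).2 (by simpa using hint)

variable {V : Type*} (G : SimpleGraph V) (lt : V → V → Prop)

/-- the arc (u,v) lies in a `Gᶜ`-triangle with middle vertex `w`. -/
def ArcSpecial (u v : V) : Prop :=
  ∃ w, ¬G.Adj u w ∧ ¬G.Adj w v ∧ lt u w ∧ lt w v

noncomputable def arcEdge (a : Arc G lt) : Sym2 (V ⊕ V) :=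
  if ArcSpecial G lt a.1.1 a.1.2 then s(Sum.inl a.1.2, Sum.inr a.1.1)
  else s(Sum.inl a.1.1, Sum.inl a.1.2)

noncomputable def HAux : SimpleGraph (V ⊕ V) :=
  SimpleGraph.fromEdgeSet (Set.range (arcEdge G lt))

variable {G lt}

lemma lt_asymm' (hlt : IsStrictTotalOrder V lt) {a b : V} (h : lt a b) : ¬ lt b a := by
  haveI := hlt
  exact fun h' => absurd (Trans.trans h h') (irrefl a)

lemma lt_ne (hlt : IsStrictTotalOrder V lt) {a b : V} (h : lt a b) : a ≠ b := by
  haveI := hlt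
  exact fun e => absurd (e ▸ h) (irrefl b)

/-- paw-freeness: any `Gᶜ`-neighbor of a vertex of a `Gᶜ`-triangle is in the triangle. -/
lemma tri_nbr (hpaw : ¬ ContainsCopy pawGraph Gᶜ) {a b c d : V}
    (hab : ¬G.Adj a b) (hac : ¬G.Adj a c) (hbc : ¬G.Adj b c)
    (nab : a ≠ b) (nac : a ≠ c) (nbc : b ≠ c)
    (had : ¬G.Adj a d) (nad : d ≠ a) : d = b ∨ d = c := by
  by_contra h
  push_neg at h
  obtain ⟨ndb, ndc⟩ := h
  apply hpaw
  refine ⟨![b, c, a, d], ?_, ?_⟩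
  · intro x y hxy
    fin_cases x <;> fin_cases y <;> simp_all <;> tauto
  · intro x y hxy
    have nba := Ne.symm nab; have nca := Ne.symm nac; have ncb := Ne.symm nbc
    have nda := nad; have hba := fun h => hab (G.adj_symm h)
    have hca := fun h => hac (G.adj_symm h); have hcb := fun h => hbc (G.adj_symm h)
    have hda := fun h => had (G.adj_symm h)
    fin_cases x <;> fin_cases y <;>
      simp_all [pawGraph, SimpleGraph.fromEdgeSet_adj, SimpleGraph.compl_adj,
        Sym2.eq, Sym2.rel_iff'] <;> tauto

section Tri
variable (hlt : IsStrictTotalOrder V lt) (hpaw : ¬ ContainsCopy pawGraph Gᶜ)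
variable {u₁ w u₂ : V} (h1 : ¬G.Adj u₁ w) (h2 : ¬G.Adj w u₂) (h3 : ¬G.Adj u₁ u₂)
variable (l1 : lt u₁ w) (l2 : lt w u₂)

include hlt hpaw h1 h2 h3 l1 l2 in
/-- Any arc touching the triangle {u₁, w, u₂} is one of its three arcs. -/
lemma arc_in_tri {v₁ v₂ : V} (hv : ¬G.Adj v₁ v₂) (lv : lt v₁ v₂)
    (hmem : v₁ = u₁ ∨ v₁ = w ∨ v₁ = u₂ ∨ v₂ = u₁ ∨ v₂ = w ∨ v₂ = u₂) :
    (v₁ = u₁ ∧ v₂ = w) ∨ (v₁ = w ∧ v₂ = u₂) ∨ (v₁ = u₁ ∧ v₂ = u₂) := by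
  have l3 : lt u₁ u₂ := hlt.toIsTrans.trans _ _ _ l1 l2
  have n1 : u₁ ≠ w := lt_ne hlt l1
  have n2 : w ≠ u₂ := lt_ne hlt l2
  have n3 : u₁ ≠ u₂ := lt_ne hlt l3
  have nv : v₁ ≠ v₂ := lt_ne hlt lv
  have h1' := fun h => h1 (G.adj_symm h)
  have h2' := fun h => h2 (G.adj_symm h)
  have h3' := fun h => h3 (G.adj_symm h)
  have hv' := fun h => hv (G.adj_symm h)
  rcases hmem with rfl | rfl | rfl | rfl | rfl | rfl
  · rcases tri_nbr hpaw h1 h3 h2 n1 n3 n2 hv nv.symm with rfl | rfl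
    · exact Or.inl ⟨rfl, rfl⟩
    · exact Or.inr (Or.inr ⟨rfl, rfl⟩)
  · rcases tri_nbr hpaw h1' h2 h3 n1.symm n2 n3 hv nv.symm with rfl | rfl
    · exact absurd lv (lt_asymm' hlt l1)
    · exact Or.inr (Or.inl ⟨rfl, rfl⟩)
  · rcases tri_nbr hpaw h3' h2' h1 n3.symm n2.symm n1 hv nv.symm with rfl | rfl
    · exact absurd lv (lt_asymm' hlt l3)
    · exact absurd lv (lt_asymm' hlt l2)
  · rcases tri_nbr hpaw h1 h3 h2 n1 n3 n2 hv' nv with rfl | rfl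
    · exact absurd lv (lt_asymm' hlt l1)
    · exact absurd lv (lt_asymm' hlt l3)
  · rcases tri_nbr hpaw h1' h2 h3 n1.symm n2 n3 hv' nv with rfl | rfl
    · exact Or.inl ⟨rfl, rfl⟩
    · exact absurd lv (lt_asymm' hlt l2)
  · rcases tri_nbr hpaw h3' h2' h1 n3.symm n2.symm n1 hv' nv with rfl | rfl
    · exact Or.inr (Or.inr ⟨rfl, rfl⟩)
    · exact Or.inr (Or.inl ⟨rfl, rfl⟩)

include hlt hpaw h1 h2 h3 l1 l2 in
lemma not_special_left : ¬ ArcSpecial G lt u₁ w := by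
  rintro ⟨w', a1, a2, b1, b2⟩
  have n1 : u₁ ≠ w := lt_ne hlt l1
  have n2 : w ≠ u₂ := lt_ne hlt l2
  have n3 : u₁ ≠ u₂ := lt_ne hlt (hlt.toIsTrans.trans _ _ _ l1 l2)
  rcases tri_nbr hpaw h1 h3 h2 n1 n3 n2 a1 (lt_ne hlt b1).symm with rfl | rfl
  · exact absurd b2 (fun h => lt_ne hlt h rfl)
  · exact absurd b2 (lt_asymm' hlt l2)

include hlt hpaw h1 h2 h3 l1 l2 in
lemma not_special_right : ¬ ArcSpecial G lt w u₂ := by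
  rintro ⟨w', a1, a2, b1, b2⟩
  have n1 : u₁ ≠ w := lt_ne hlt l1
  have n2 : w ≠ u₂ := lt_ne hlt l2
  have n3 : u₁ ≠ u₂ := lt_ne hlt (hlt.toIsTrans.trans _ _ _ l1 l2)
  have h1' := fun h => h1 (G.adj_symm h)
  rcases tri_nbr hpaw h1' h2 h3 n1.symm n2 n3 a1 (lt_ne hlt b1).symm with rfl | rfl
  · exact absurd b1 (lt_asymm' hlt l1)
  · exact absurd b2 (fun h => lt_ne hlt h rfl)

end Tri

lemma arcEdge_not_diag (hlt : IsStrictTotalOrder V lt) (a : Arc G lt) :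
    ¬ (arcEdge G lt a).IsDiag := by
  unfold arcEdge
  split
  · simp
  · simp [Sum.inl.injEq]
    exact lt_ne hlt a.2.1

lemma arcEdge_injective (hlt : IsStrictTotalOrder V lt) :
    Function.Injective (arcEdge G lt) := by
  rintro ⟨⟨u₁, u₂⟩, lu, hu⟩ ⟨⟨v₁, v₂⟩, lv, hv⟩ h
  unfold arcEdge at h
  simp only at h
  split at h <;> split at h <;>
    simp only [Sym2.eq, Sym2.rel_iff', Prod.mk.injEq, Prod.swap_prod_mk,
      Sum.inl.injEq, Sum.inr.injEq] at h
  · obtain ⟨rfl, rfl⟩ : u₂ = v₂ ∧ u₁ = v₁ := by tauto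
    rfl
  · tauto
  · tauto
  · rcases h with ⟨rfl, rfl⟩ | ⟨h1, h2⟩
    · rfl
    · subst h1; subst h2
      exact absurd lv (lt_asymm' hlt lu)

section Main
variable (hlt : IsStrictTotalOrder V lt) (hpaw : ¬ ContainsCopy pawGraph Gᶜ)

include hlt hpaw in
lemma adj_iff (p q : Arc G lt) (hne : p ≠ q) :
    (∃ x, x ∈ arcEdge G lt p ∧ x ∈ arcEdge G lt q) ↔ (RGraph G lt).Adj p q := by
  obtain ⟨⟨u₁, u₂⟩, lu, hu⟩ := p
  obtain ⟨⟨v₁, v₂⟩, lv, hv⟩ := q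
  simp only at lu hu lv hv
  have hne' : ¬ (u₁ = v₁ ∧ u₂ = v₂) := by
    rintro ⟨rfl, rfl⟩; exact hne rfl
  show (∃ x, x ∈ arcEdge G lt ⟨(u₁, u₂), lu, hu⟩ ∧ x ∈ arcEdge G lt ⟨(v₁, v₂), lv, hv⟩) ↔
    _ ∧ (u₁ = v₁ ∨ u₁ = v₂ ∨ u₂ = v₁ ∨ u₂ = v₂) ∧ ¬ (u₁ = v₁ ∧ ¬ G.Adj u₂ v₂)
  by_cases sp : ArcSpecial G lt u₁ u₂ <;> by_cases sq : ArcSpecial G lt v₁ v₂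
  · -- both special
    obtain ⟨w, hw1, hw2, m1, m2⟩ := sp
    have hq3 := arc_in_tri hlt hpaw hw1 hw2 hu m1 m2 hv lv
    have notouch : ¬ (v₁ = u₁ ∨ v₁ = w ∨ v₁ = u₂ ∨ v₂ = u₁ ∨ v₂ = w ∨ v₂ = u₂) := by
      intro hmem
      rcases hq3 hmem with ⟨e1, e2⟩ | ⟨e1, e2⟩ | ⟨e1, e2⟩
      · rw [e1, e2] at sq
        exact not_special_left hlt hpaw hw1 hw2 hu m1 m2 sq
      · rw [e1, e2] at sq
        exact not_special_right hlt hpaw hw1 hw2 hu m1 m2 sq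
      · exact hne' ⟨e1.symm, e2.symm⟩
    rw [show arcEdge G lt ⟨(u₁, u₂), lu, hu⟩ = s(Sum.inl u₂, Sum.inr u₁) from
        if_pos ⟨w, hw1, hw2, m1, m2⟩,
      show arcEdge G lt ⟨(v₁, v₂), lv, hv⟩ = s(Sum.inl v₂, Sum.inr v₁) from if_pos sq]
    constructor
    · rintro ⟨x, hx1, hx2⟩
      exfalso
      simp only [Sym2.mem_iff] at hx1 hx2
      rcases hx1 with rfl | rfl <;> rcases hx2 with h | h <;>
        simp only [Sum.inl.injEq, Sum.inr.injEq, reduceCtorEq] at h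
      · exact notouch (Or.inr (Or.inr (Or.inr (Or.inr (Or.inr h.symm)))))
      · exact notouch (Or.inl h.symm)
    · rintro ⟨-, hsh, -⟩
      exfalso
      apply notouch
      rcases hsh with h | h | h | h
      · exact Or.inl h.symm
      · exact Or.inr (Or.inr (Or.inr (Or.inl h.symm)))
      · exact Or.inr (Or.inr (Or.inl h.symm))
      · exact Or.inr (Or.inr (Or.inr (Or.inr (Or.inr h.symm))))
  · -- p special, q not
    obtain ⟨w, hw1, hw2, m1, m2⟩ := sp
    have hq3 := arc_in_tri hlt hpaw hw1 hw2 hu m1 m2 hv lv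
    rw [show arcEdge G lt ⟨(u₁, u₂), lu, hu⟩ = s(Sum.inl u₂, Sum.inr u₁) from
        if_pos ⟨w, hw1, hw2, m1, m2⟩,
      show arcEdge G lt ⟨(v₁, v₂), lv, hv⟩ = s(Sum.inl v₁, Sum.inl v₂) from if_neg sq]
    constructor
    · rintro ⟨x, hx1, hx2⟩
      simp only [Sym2.mem_iff] at hx1 hx2
      have hsh : u₂ = v₁ ∨ u₂ = v₂ := by
        rcases hx1 with rfl | rfl <;> rcases hx2 with h | h <;>
          simp only [Sum.inl.injEq, reduceCtorEq] at h
        · exact Or.inl h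
        · exact Or.inr h
      have hmem : v₁ = u₁ ∨ v₁ = w ∨ v₁ = u₂ ∨ v₂ = u₁ ∨ v₂ = w ∨ v₂ = u₂ := by
        rcases hsh with h | h
        · exact Or.inr (Or.inr (Or.inl h.symm))
        · exact Or.inr (Or.inr (Or.inr (Or.inr (Or.inr h.symm))))
      rcases hq3 hmem with ⟨e1, e2⟩ | ⟨e1, e2⟩ | ⟨e1, e2⟩
      · exfalso
        rcases hsh with h | h
        · exact lt_ne hlt lu (h.trans e1).symm
        · exact lt_ne hlt m2 (h.trans e2).symm
      · refine ⟨hne, Or.inr (Or.inr (Or.inr e2.symm)), ?_⟩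
        rintro ⟨h, -⟩
        exact lt_ne hlt m1 (h.trans e1)
      · exact absurd ⟨e1.symm, e2.symm⟩ hne'
    · rintro ⟨-, hsh, hbad⟩
      have hmem : v₁ = u₁ ∨ v₁ = w ∨ v₁ = u₂ ∨ v₂ = u₁ ∨ v₂ = w ∨ v₂ = u₂ := by
        rcases hsh with h | h | h | h
        · exact Or.inl h.symm
        · exact Or.inr (Or.inr (Or.inr (Or.inl h.symm)))
        · exact Or.inr (Or.inr (Or.inl h.symm))
        · exact Or.inr (Or.inr (Or.inr (Or.inr (Or.inr h.symm))))
      rcases hq3 hmem with ⟨e1, e2⟩ | ⟨e1, e2⟩ | ⟨e1, e2⟩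
      · exact absurd ⟨e1.symm, by rw [e2]; exact fun h => hw2 (G.adj_symm h)⟩ hbad
      · exact ⟨Sum.inl u₂, by simp, by rw [e2]; simp⟩
      · exact absurd ⟨e1.symm, e2.symm⟩ hne'
  · -- q special, p not
    obtain ⟨w, hw1, hw2, m1, m2⟩ := sq
    have hq3 := arc_in_tri hlt hpaw hw1 hw2 hv m1 m2 hu lu
    rw [show arcEdge G lt ⟨(u₁, u₂), lu, hu⟩ = s(Sum.inl u₁, Sum.inl u₂) from if_neg sp,
      show arcEdge G lt ⟨(v₁, v₂), lv, hv⟩ = s(Sum.inl v₂, Sum.inr v₁) from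
        if_pos ⟨w, hw1, hw2, m1, m2⟩]
    constructor
    · rintro ⟨x, hx1, hx2⟩
      simp only [Sym2.mem_iff] at hx1 hx2
      have hsh : v₂ = u₁ ∨ v₂ = u₂ := by
        rcases hx2 with rfl | rfl <;> rcases hx1 with h | h <;>
          simp only [Sum.inl.injEq, reduceCtorEq] at h
        · exact Or.inl h
        · exact Or.inr h
      have hmem : u₁ = v₁ ∨ u₁ = w ∨ u₁ = v₂ ∨ u₂ = v₁ ∨ u₂ = w ∨ u₂ = v₂ := by
        rcases hsh with h | h
        · exact Or.inr (Or.inr (Or.inl h.symm))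
        · exact Or.inr (Or.inr (Or.inr (Or.inr (Or.inr h.symm))))
      rcases hq3 hmem with ⟨e1, e2⟩ | ⟨e1, e2⟩ | ⟨e1, e2⟩
      · exfalso
        rcases hsh with h | h
        · exact lt_ne hlt lv (h.trans e1).symm
        · exact lt_ne hlt m2 (h.trans e2).symm
      · refine ⟨hne, Or.inr (Or.inr (Or.inr e2)), ?_⟩
        rintro ⟨h, -⟩
        exact lt_ne hlt m1 (h.symm.trans e1)
      · exact absurd ⟨e1, e2⟩ hne'
    · rintro ⟨-, hsh, hbad⟩
      have hmem : u₁ = v₁ ∨ u₁ = w ∨ u₁ = v₂ ∨ u₂ = v₁ ∨ u₂ = w ∨ u₂ = v₂ := by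
        rcases hsh with h | h | h | h
        · exact Or.inl h
        · exact Or.inr (Or.inr (Or.inl h))
        · exact Or.inr (Or.inr (Or.inr (Or.inl h)))
        · exact Or.inr (Or.inr (Or.inr (Or.inr (Or.inr h))))
      rcases hq3 hmem with ⟨e1, e2⟩ | ⟨e1, e2⟩ | ⟨e1, e2⟩
      · exact absurd ⟨e1, by rw [e2]; exact hw2⟩ hbad
      · exact ⟨Sum.inl u₂, by simp, by rw [e2]; simp⟩
      · exact absurd ⟨e1, e2⟩ hne'
  · -- both non special
    rw [show arcEdge G lt ⟨(u₁, u₂), lu, hu⟩ = s(Sum.inl u₁, Sum.inl u₂) from if_neg sp,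
      show arcEdge G lt ⟨(v₁, v₂), lv, hv⟩ = s(Sum.inl v₁, Sum.inl v₂) from if_neg sq]
    have key : (u₁ = v₁ ∨ u₁ = v₂ ∨ u₂ = v₁ ∨ u₂ = v₂) →
        ¬ (u₁ = v₁ ∧ ¬ G.Adj u₂ v₂) := by
      rintro hsh ⟨e, hbad⟩
      have nuv : u₂ ≠ v₂ := fun h => hne' ⟨e, h⟩
      rcases (show lt u₂ v₂ ∨ u₂ = v₂ ∨ lt v₂ u₂ by
          by_cases a : lt u₂ v₂
          · exact Or.inl a
          by_cases b : lt v₂ u₂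
          · exact Or.inr (Or.inr b)
          exact Or.inr (Or.inl (hlt.trichotomous u₂ v₂ a b))) with h | h | h
      · exact sq ⟨u₂, e ▸ hu, hbad, e ▸ lu, h⟩
      · exact nuv h
      · exact sp ⟨v₂, e.symm ▸ hv, fun hh => hbad (G.adj_symm hh), e.symm ▸ lv, h⟩
    constructor
    · rintro ⟨x, hx1, hx2⟩
      simp only [Sym2.mem_iff] at hx1 hx2
      have hsh : u₁ = v₁ ∨ u₁ = v₂ ∨ u₂ = v₁ ∨ u₂ = v₂ := by
        rcases hx1 with rfl | rfl <;> rcases hx2 with h | h <;>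
          simp only [Sum.inl.injEq] at h
        · exact Or.inl h
        · exact Or.inr (Or.inl h)
        · exact Or.inr (Or.inr (Or.inl h))
        · exact Or.inr (Or.inr (Or.inr h))
      exact ⟨hne, hsh, key hsh⟩
    · rintro ⟨-, hsh, -⟩
      rcases hsh with h | h | h | h
      · exact ⟨Sum.inl u₁, by simp, by rw [h]; simp⟩
      · exact ⟨Sum.inl u₁, by simp, by rw [h]; simp⟩
      · exact ⟨Sum.inl u₂, by simp, by rw [h]; simp⟩
      · exact ⟨Sum.inl u₂, by simp, by rw [h]; simp⟩

set_option maxHeartbeats 1000000 in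
include hlt hpaw in
noncomputable def mainIso : (RGraph G lt) ≃g (HAux G lt).lineGraph := by
  have hmem : ∀ a : Arc G lt, arcEdge G lt a ∈ (HAux G lt).edgeSet := by
    intro a
    rw [HAux, SimpleGraph.edgeSet_fromEdgeSet]
    exact ⟨⟨a, rfl⟩, arcEdge_not_diag hlt a⟩
  have hbij : Function.Bijective (fun a : Arc G lt => (⟨arcEdge G lt a, hmem a⟩ :
      (HAux G lt).edgeSet)) := by
    constructor
    · intro a b h
      exact arcEdge_injective hlt (congrArg Subtype.val h)
    · rintro ⟨e, he⟩
      rw [HAux, SimpleGraph.edgeSet_fromEdgeSet] at he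
      obtain ⟨⟨a, rfl⟩, -⟩ := he
      exact ⟨a, rfl⟩
  refine ⟨Equiv.ofBijective _ hbij, ?_⟩
  intro p q
  simp only [Equiv.ofBijective_apply, SimpleGraph.lineGraph]
  by_cases hpq : p = q
  · subst hpq
    simp only [ne_eq, not_true_eq_false, false_and]
    exact iff_of_false id ((RGraph G lt).loopless.irrefl p)
  · rw [show ((⟨arcEdge G lt p, hmem p⟩ : (HAux G lt).edgeSet) ≠ ⟨arcEdge G lt q, hmem q⟩) =
        True from eq_true (fun h => hpq (arcEdge_injective hlt (congrArg Subtype.val h)))]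
    rw [true_and]
    rw [← adj_iff hlt hpaw p q hpq]
    rw [Set.inter_nonempty]
    constructor
    · rintro ⟨x, h1, h2⟩
      exact ⟨x, SetLike.mem_coe.1 h1, SetLike.mem_coe.1 h2⟩
    · rintro ⟨x, h1, h2⟩
      exact ⟨x, SetLike.mem_coe.2 h1, SetLike.mem_coe.2 h2⟩

end Main
end CJAux

/-- if the complement of `G` has no paw subgraph, then `R≺(G)` is a line
graph (of some finite simple graph). -/
theorem statement15 {V : Type*} [Fintype V] [DecidableEq V]
    (G : SimpleGraph V) [DecidableRel G.Adj]
    (lt : V → V → Prop) [DecidableRel lt] (hlt : IsStrictTotalOrder V lt)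
    (hpaw : ¬ ContainsCopy pawGraph Gᶜ) :
    ∃ (n : ℕ) (H : SimpleGraph (Fin n)),
      Nonempty (RGraph G lt ≃g H.lineGraph) := by
  classical
  obtain ⟨iso1⟩ : Nonempty ((RGraph G lt) ≃g (HAux G lt).lineGraph) := ⟨mainIso hlt hpaw⟩
  set n := Fintype.card (V ⊕ V) with hn
  set e : Fin n ≃ (V ⊕ V) := (Fintype.equivFin (V ⊕ V)).symm with he
  refine ⟨n, (HAux G lt).comap e.toEmbedding, ⟨?_⟩⟩
  exact iso1.trans (lineGraphIso (SimpleGraph.Iso.comap e (HAux G lt)).symm)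
end

section
/- Let G = (V,E) be a finite simple graph. Then the Cornaz–Jost graph R≺(G) is claw-free for every linear order ≺ on V if and only if the complement of G does not contain a kite as a subgraph. -/
open scoped Classical

section Aux

variable {V : Type*} (G : SimpleGraph V) (lt : V → V → Prop)

lemma rgraph_adj (p q : Arc G lt) :
    (RGraph G lt).Adj p q ↔ p ≠ q ∧
      (p.1.1 = q.1.1 ∨ p.1.1 = q.1.2 ∨ p.1.2 = q.1.1 ∨ p.1.2 = q.1.2) ∧
      ¬ (p.1.1 = q.1.1 ∧ ¬ G.Adj p.1.2 q.1.2) := Iff.rfl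

lemma kite_copy {W : Type*} (H : SimpleGraph W) (a b c d e : W)
    (h1 : H.Adj a b) (h2 : H.Adj a c) (h3 : H.Adj b c) (h4 : H.Adj c d) (h5 : H.Adj d e)
    (n1 : a ≠ d) (n2 : a ≠ e) (n3 : b ≠ d) (n4 : b ≠ e) (n5 : c ≠ e) :
    ContainsCopy kiteGraph H := by
  have e1 := h1.ne; have e2 := h2.ne; have e3 := h3.ne; have e4 := h4.ne; have e5 := h5.ne
  refine ⟨![a,b,c,d,e], ?_, ?_⟩
  · intro i j hij
    fin_cases i <;> fin_cases j <;> simp_all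
  · intro i j hij
    fin_cases i <;> fin_cases j <;>
      simp only [kiteGraph, SimpleGraph.fromEdgeSet_adj, Set.mem_insert_iff,
        Set.mem_singleton_iff, Sym2.eq, Sym2.rel_iff', Prod.mk.injEq, Prod.swap_prod_mk] at hij <;>
      simp_all <;>
      first | exact h1.symm | exact h2.symm | exact h3.symm | exact h4.symm | exact h5.symm

lemma arc_ne (hirr : ∀ x, ¬ lt x x) (a : Arc G lt) : a.1.1 ≠ a.1.2 :=
  fun h => hirr _ (h ▸ a.2.1)

lemma two_leaves (hirr : ∀ x, ¬ lt x x) (q r : Arc G lt) (w : V) (hne : q ≠ r)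
    (hadj : ¬ (RGraph G lt).Adj q r)
    (hq : q.1.1 = w ∨ q.1.2 = w) (hr : r.1.1 = w ∨ r.1.2 = w) :
    q.1.1 = w ∧ r.1.1 = w ∧ ¬ G.Adj q.1.2 r.1.2 := by
  have hshare : q.1.1 = r.1.1 ∨ q.1.1 = r.1.2 ∨ q.1.2 = r.1.1 ∨ q.1.2 = r.1.2 := by
    rcases hq with h | h <;> rcases hr with h' | h'
    · exact Or.inl (h.trans h'.symm)
    · exact Or.inr (Or.inl (h.trans h'.symm))
    · exact Or.inr (Or.inr (Or.inl (h.trans h'.symm)))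
    · exact Or.inr (Or.inr (Or.inr (h.trans h'.symm)))
  have hbad : q.1.1 = r.1.1 ∧ ¬ G.Adj q.1.2 r.1.2 := by
    by_contra hb
    exact hadj ((rgraph_adj G lt q r).mpr ⟨hne, hshare, hb⟩)
  rcases hq with h | h
  · refine ⟨h, ?_, hbad.2⟩
    rcases hr with h' | h'
    · exact h'
    · exact hbad.1.symm.trans h
  · rcases hr with h' | h'
    · exact absurd ((hbad.1.trans h').trans h.symm) (arc_ne G lt hirr q)
    · exact absurd (Subtype.ext (Prod.ext hbad.1 (h.trans h'.symm))) hne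

lemma config (hirr : ∀ x, ¬ lt x x)
    (htrans : ∀ x y z, lt x y → lt y z → lt x z) (p q r s : Arc G lt) (w w' : V)
    (hww' : p.1 = (w, w') ∨ p.1 = (w', w))
    (hpq : (RGraph G lt).Adj p q) (hpr : (RGraph G lt).Adj p r)
    (hps : (RGraph G lt).Adj p s)
    (hqr : ¬ (RGraph G lt).Adj q r) (hqs : ¬ (RGraph G lt).Adj q s)
    (hrs : ¬ (RGraph G lt).Adj r s)
    (hqrne : q ≠ r) (hqsne : q ≠ s) (hrsne : r ≠ s)
    (hqw : q.1.1 = w ∨ q.1.2 = w) (hrw : r.1.1 = w ∨ r.1.2 = w) :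
    ContainsCopy kiteGraph Gᶜ := by
  obtain ⟨hq1, hr1, hxy⟩ := two_leaves G lt hirr q r w hqrne hqr hqw hrw
  set x := q.1.2 with hx
  set y := r.1.2 with hy
  have hwx : ¬ G.Adj w x := hq1 ▸ q.2.2
  have hwy : ¬ G.Adj w y := hr1 ▸ r.2.2
  have hwnex : w ≠ x := hq1 ▸ arc_ne G lt hirr q
  have hwney : w ≠ y := hr1 ▸ arc_ne G lt hirr r
  have hxney : x ≠ y := fun h => hqrne (Subtype.ext (Prod.ext (hq1.trans hr1.symm) h))
  have hnww' : ¬ G.Adj w w' ∧ w ≠ w' := by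
    rcases hww' with hp | hp
    · have h1 : ¬ G.Adj w w' := by have := p.2.2; rw [hp] at this; exact this
      have h2 : lt w w' := by have := p.2.1; rw [hp] at this; exact this
      exact ⟨h1, fun h => hirr _ (h ▸ h2)⟩
    · have h1 : ¬ G.Adj w' w := by have := p.2.2; rw [hp] at this; exact this
      have h2 : lt w' w := by have := p.2.1; rw [hp] at this; exact this
      exact ⟨fun h => h1 h.symm, fun h => hirr _ (h ▸ h2)⟩
  have hcww' : Gᶜ.Adj w w' := (G.compl_adj _ _).mpr ⟨hnww'.2, hnww'.1⟩
  have key : ∀ ℓ : Arc G lt, (RGraph G lt).Adj p ℓ → ℓ.1.1 = w → ℓ.1.2 ≠ w' := by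
    intro ℓ hpl hl1 hl2
    rcases hww' with hp | hp
    · refine ((rgraph_adj G lt p ℓ).mp hpl).2.2 ⟨by rw [hp, hl1], ?_⟩
      rw [hp, hl2]
      exact fun h => G.irrefl h
    · have h1 : lt w ℓ.1.2 := hl1 ▸ ℓ.2.1
      have h2 : lt w' w := by have := p.2.1; rw [hp] at this; exact this
      exact hirr w' (htrans _ _ _ h2 (hl2 ▸ h1))
  have hxw' : x ≠ w' := key q hpq hq1
  have hyw' : y ≠ w' := key r hpr hr1
  have hs_share : (s.1.1 = w ∨ s.1.2 = w) ∨ (s.1.1 = w' ∨ s.1.2 = w') := by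
    have h := ((rgraph_adj G lt p s).mp hps).2.1
    rcases hww' with hp | hp <;> rw [hp] at h <;> rcases h with h | h | h | h
    exacts [Or.inl (Or.inl h.symm), Or.inl (Or.inr h.symm),
      Or.inr (Or.inl h.symm), Or.inr (Or.inr h.symm),
      Or.inr (Or.inl h.symm), Or.inr (Or.inr h.symm),
      Or.inl (Or.inl h.symm), Or.inl (Or.inr h.symm)]
  by_cases hsw : s.1.1 = w ∨ s.1.2 = w
  · obtain ⟨_, hs1, hxz⟩ := two_leaves G lt hirr q s w hqsne hqs (Or.inl hq1) hsw
    obtain ⟨_, _, hyz⟩ := two_leaves G lt hirr r s w hrsne hrs (Or.inl hr1) hsw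
    set z := s.1.2 with hz
    have hwz : ¬ G.Adj w z := hs1 ▸ s.2.2
    have hwnez : w ≠ z := hs1 ▸ arc_ne G lt hirr s
    have hxnez : x ≠ z := fun h => hqsne (Subtype.ext (Prod.ext (hq1.trans hs1.symm) h))
    have hynez : y ≠ z := fun h => hrsne (Subtype.ext (Prod.ext (hr1.trans hs1.symm) h))
    have hzw' : z ≠ w' := key s hps hs1
    exact kite_copy Gᶜ x y z w w'
      ((G.compl_adj _ _).mpr ⟨hxney, hxy⟩)
      ((G.compl_adj _ _).mpr ⟨hxnez, hxz⟩)
      ((G.compl_adj _ _).mpr ⟨hynez, hyz⟩)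
      ((G.compl_adj _ _).mpr ⟨hwnez.symm, fun h => hwz h.symm⟩)
      hcww'
      hwnex.symm hxw' hwney.symm hyw' hzw'
  · push_neg at hsw
    have hsw' : s.1.1 = w' ∨ s.1.2 = w' := by tauto
    have hsx : s.1.1 ≠ x ∧ s.1.2 ≠ x := by
      constructor <;> intro h
      · obtain ⟨hq1', _, _⟩ := two_leaves G lt hirr q s x hqsne hqs (Or.inr rfl) (Or.inl h)
        exact hwnex (hq1.symm.trans hq1')
      · obtain ⟨hq1', _, _⟩ := two_leaves G lt hirr q s x hqsne hqs (Or.inr rfl) (Or.inr h)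
        exact hwnex (hq1.symm.trans hq1')
    have hsy : s.1.1 ≠ y ∧ s.1.2 ≠ y := by
      constructor <;> intro h
      · obtain ⟨hr1', _, _⟩ := two_leaves G lt hirr r s y hrsne hrs (Or.inr rfl) (Or.inl h)
        exact hwney (hr1.symm.trans hr1')
      · obtain ⟨hr1', _, _⟩ := two_leaves G lt hirr r s y hrsne hrs (Or.inr rfl) (Or.inr h)
        exact hwney (hr1.symm.trans hr1')
    have hcs : Gᶜ.Adj s.1.1 s.1.2 := (G.compl_adj _ _).mpr ⟨arc_ne G lt hirr s, s.2.2⟩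
    obtain ⟨z, hw'z, hzw, hzx, hzy⟩ :
        ∃ z, Gᶜ.Adj w' z ∧ z ≠ w ∧ z ≠ x ∧ z ≠ y := by
      rcases hsw' with h1 | h2
      · exact ⟨s.1.2, h1 ▸ hcs, hsw.2, hsx.2, hsy.2⟩
      · exact ⟨s.1.1, h2 ▸ hcs.symm, hsw.1, hsx.1, hsy.1⟩
    exact kite_copy Gᶜ x y w w' z
      ((G.compl_adj _ _).mpr ⟨hxney, hxy⟩)
      (((G.compl_adj _ _).mpr ⟨hwnex, hwx⟩).symm)
      (((G.compl_adj _ _).mpr ⟨hwney, hwy⟩).symm)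
      hcww'
      hw'z
      hxw' hzx.symm hyw' hzy.symm hzw.symm

end Aux

set_option maxHeartbeats 2000000

/-- `R≺(G)` is claw-free for every linear order `≺` iff the complement of `G`
contains no kite as a subgraph. -/
theorem statement16 {V : Type*} [Fintype V] [DecidableEq V]
    (G : SimpleGraph V) [DecidableRel G.Adj] :
    (∀ lt : V → V → Prop, IsStrictTotalOrder V lt → ClawFree (RGraph G lt)) ↔
      ¬ ContainsCopy kiteGraph Gᶜ := by
  constructor
  · -- claw-free for every order implies no kite
    intro H hk
    obtain ⟨k, kinj, kadj⟩ := hk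
    have hab : Gᶜ.Adj (k 0) (k 1) := kadj 0 1 (by simp [kiteGraph])
    have hac : Gᶜ.Adj (k 0) (k 2) := kadj 0 2 (by simp [kiteGraph])
    have hbc : Gᶜ.Adj (k 1) (k 2) := kadj 1 2 (by simp [kiteGraph])
    have hcd : Gᶜ.Adj (k 2) (k 3) := kadj 2 3 (by simp [kiteGraph])
    have hde : Gᶜ.Adj (k 3) (k 4) := kadj 3 4 (by simp [kiteGraph])
    have d01 : k 0 ≠ k 1 := kinj.ne (by decide)
    have d02 : k 0 ≠ k 2 := kinj.ne (by decide)
    have d03 : k 0 ≠ k 3 := kinj.ne (by decide)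
    have d04 : k 0 ≠ k 4 := kinj.ne (by decide)
    have d12 : k 1 ≠ k 2 := kinj.ne (by decide)
    have d13 : k 1 ≠ k 3 := kinj.ne (by decide)
    have d14 : k 1 ≠ k 4 := kinj.ne (by decide)
    have d23 : k 2 ≠ k 3 := kinj.ne (by decide)
    have d24 : k 2 ≠ k 4 := kinj.ne (by decide)
    have d34 : k 3 ≠ k 4 := kinj.ne (by decide)
    have d10 := d01.symm; have d20 := d02.symm; have d30 := d03.symm
    have d40 := d04.symm; have d21 := d12.symm; have d31 := d13.symm
    have d41 := d14.symm; have d32 := d23.symm; have d42 := d24.symm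
    have d43 := d34.symm
    set f : V → ℕ := fun v => if v = k 4 then 0 else if v = k 3 then 1 else
      if v = k 2 then 2 else 3 with hf
    set L : V → V → Prop := fun x y => f x < f y ∨ (f x = f y ∧ WellOrderingRel x y) with hL
    have hsto : IsStrictTotalOrder V L := by
      haveI h1 : IsTrichotomous V L := by
        constructor
        intro a b
        rcases lt_trichotomy (f a) (f b) with h | h | h
        · exact fun hab _ => absurd (Or.inl h) hab
        · rcases trichotomous_of WellOrderingRel a b with h' | h' | h'
          · exact fun hab _ => absurd (Or.inr ⟨h, h'⟩) hab
          · exact fun _ _ => h'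
          · exact fun _ hba => absurd (Or.inr ⟨h.symm, h'⟩) hba
        · exact fun _ hba => absurd (Or.inl h) hba
      haveI h2 : IsIrrefl V L := by
        constructor
        intro a h
        rcases h with h | ⟨_, h⟩
        · exact absurd h (lt_irrefl _)
        · exact absurd h (irrefl_of WellOrderingRel a)
      haveI h3 : IsTrans V L := by
        constructor
        rintro a b c (h | ⟨h, h'⟩) (g | ⟨g, g'⟩)
        · exact Or.inl (h.trans g)
        · exact Or.inl (g ▸ h)
        · exact Or.inl (h ▸ g)
        · exact Or.inr ⟨h.trans g, trans_of WellOrderingRel h' g'⟩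
      haveI h4 : IsStrictOrder V L := ⟨⟩
      exact ⟨⟩
    have f4 : f (k 4) = 0 := by simp [hf]
    have f3 : f (k 3) = 1 := by simp [hf, d34]
    have f2 : f (k 2) = 2 := by simp [hf, d24, d23]
    have f0 : f (k 0) = 3 := by simp [hf, d04, d03, d02]
    have f1 : f (k 1) = 3 := by simp [hf, d14, d13, d12]
    have nGab : ¬ G.Adj (k 0) (k 1) := ((G.compl_adj _ _).mp hab).2
    have nGac : ¬ G.Adj (k 0) (k 2) := ((G.compl_adj _ _).mp hac).2
    have nGbc : ¬ G.Adj (k 1) (k 2) := ((G.compl_adj _ _).mp hbc).2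
    have nGcd : ¬ G.Adj (k 2) (k 3) := ((G.compl_adj _ _).mp hcd).2
    have nGde : ¬ G.Adj (k 3) (k 4) := ((G.compl_adj _ _).mp hde).2
    have nGba : ¬ G.Adj (k 1) (k 0) := fun h => nGab h.symm
    have nGca : ¬ G.Adj (k 2) (k 0) := fun h => nGac h.symm
    have nGcb : ¬ G.Adj (k 2) (k 1) := fun h => nGbc h.symm
    have nGdc : ¬ G.Adj (k 3) (k 2) := fun h => nGcd h.symm
    have nGed : ¬ G.Adj (k 4) (k 3) := fun h => nGde h.symm
    apply H L hsto
    refine ⟨![⟨(k 3, k 2), Or.inl (by rw [f3, f2]; norm_num), nGdc⟩,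
             ⟨(k 2, k 0), Or.inl (by rw [f2, f0]; norm_num), nGca⟩,
             ⟨(k 2, k 1), Or.inl (by rw [f2, f1]; norm_num), nGcb⟩,
             ⟨(k 4, k 3), Or.inl (by rw [f4, f3]; norm_num), nGed⟩], ?_, ?_⟩
    · intro i j h
      fin_cases i <;> fin_cases j <;>
        simp_all [Subtype.mk.injEq, Prod.mk.injEq]
    · intro i j
      fin_cases i <;> fin_cases j <;>
        simp_all [rgraph_adj, clawGraph, SimpleGraph.fromEdgeSet_adj,
          Subtype.mk.injEq, Prod.mk.injEq, Sym2.eq, Sym2.rel_iff', Prod.swap_prod_mk]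
  · -- no kite implies claw-free for every order
    intro hnk L hsto hcl
    obtain ⟨m, minj, madj⟩ := hcl
    have hirr : ∀ x, ¬ L x x := fun x => hsto.toIsStrictOrder.toIrrefl.irrefl x
    have htrans : ∀ x y z, L x y → L y z → L x z :=
      fun x y z => hsto.toIsStrictOrder.toIsTrans.trans x y z
    have hpq : (RGraph G L).Adj (m 0) (m 1) := (madj 0 1).mpr (by simp [clawGraph])
    have hpr : (RGraph G L).Adj (m 0) (m 2) := (madj 0 2).mpr (by simp [clawGraph])
    have hps : (RGraph G L).Adj (m 0) (m 3) := (madj 0 3).mpr (by simp [clawGraph])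
    have hqr : ¬ (RGraph G L).Adj (m 1) (m 2) := fun h => by
      simpa [clawGraph] using (madj 1 2).mp h
    have hqs : ¬ (RGraph G L).Adj (m 1) (m 3) := fun h => by
      simpa [clawGraph] using (madj 1 3).mp h
    have hrs : ¬ (RGraph G L).Adj (m 2) (m 3) := fun h => by
      simpa [clawGraph] using (madj 2 3).mp h
    have hqrne : m 1 ≠ m 2 := minj.ne (by decide)
    have hqsne : m 1 ≠ m 3 := minj.ne (by decide)
    have hrsne : m 2 ≠ m 3 := minj.ne (by decide)
    have hq' : ((m 1).1.1 = (m 0).1.1 ∨ (m 1).1.2 = (m 0).1.1) ∨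
        ((m 1).1.1 = (m 0).1.2 ∨ (m 1).1.2 = (m 0).1.2) := by
      have h := ((rgraph_adj G L (m 0) (m 1)).mp hpq).2.1; tauto
    have hr' : ((m 2).1.1 = (m 0).1.1 ∨ (m 2).1.2 = (m 0).1.1) ∨
        ((m 2).1.1 = (m 0).1.2 ∨ (m 2).1.2 = (m 0).1.2) := by
      have h := ((rgraph_adj G L (m 0) (m 2)).mp hpr).2.1; tauto
    have hs' : ((m 3).1.1 = (m 0).1.1 ∨ (m 3).1.2 = (m 0).1.1) ∨
        ((m 3).1.1 = (m 0).1.2 ∨ (m 3).1.2 = (m 0).1.2) := by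
      have h := ((rgraph_adj G L (m 0) (m 3)).mp hps).2.1; tauto
    rcases hq' with hq' | hq' <;> rcases hr' with hr' | hr'
    · exact hnk (config G L hirr htrans (m 0) (m 1) (m 2) (m 3) (m 0).1.1 (m 0).1.2
        (Or.inl rfl) hpq hpr hps hqr hqs hrs hqrne hqsne hrsne hq' hr')
    · rcases hs' with hs' | hs'
      · exact hnk (config G L hirr htrans (m 0) (m 1) (m 3) (m 2) (m 0).1.1 (m 0).1.2
          (Or.inl rfl) hpq hps hpr hqs hqr (fun h => hrs h.symm)
          hqsne hqrne hrsne.symm hq' hs')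
      · exact hnk (config G L hirr htrans (m 0) (m 2) (m 3) (m 1) (m 0).1.2 (m 0).1.1
          (Or.inr rfl) hpr hps hpq hrs (fun h => hqr h.symm) (fun h => hqs h.symm)
          hrsne hqrne.symm hqsne.symm hr' hs')
    · rcases hs' with hs' | hs'
      · exact hnk (config G L hirr htrans (m 0) (m 2) (m 3) (m 1) (m 0).1.1 (m 0).1.2
          (Or.inl rfl) hpr hps hpq hrs (fun h => hqr h.symm) (fun h => hqs h.symm)
          hrsne hqrne.symm hqsne.symm hr' hs')
      · exact hnk (config G L hirr htrans (m 0) (m 1) (m 3) (m 2) (m 0).1.2 (m 0).1.1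
          (Or.inr rfl) hpq hps hpr hqs hqr (fun h => hrs h.symm)
          hqsne hqrne hrsne.symm hq' hs')
    · exact hnk (config G L hirr htrans (m 0) (m 1) (m 2) (m 3) (m 0).1.2 (m 0).1.1
        (Or.inr rfl) hpq hpr hps hqr hqs hrs hqrne hqsne hrsne hq' hr')
end
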